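/- arXiv:math/0008073 — 2 statements merged into one kernel-verified Lean document; each statement's English description precedes it below -/
import Mathlib

section
/- For every positive integer k and every k-bounded partition λ, the k-conjugation operation is an involution: (λ^{ω_k})^{ω_k} = λ. -/
/-- A partition: a weakly decreasing list of positive integers
(parts listed from largest to smallest). -/
def IsPartitionList (l : List ℕ) : Prop :=
  l.Pairwise (· ≥ ·) ∧ ∀ x ∈ l, 0 < x

/-- A `k`-bounded partition: a partition all of whose parts are at most `k`. -/
def IsKBoundedPartition (k : ℕ) (l : List ℕ) : Prop :=
  IsPartitionList l ∧ ∀ x ∈ l, x ≤ k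

/-- Row `i` of a diagram whose rows (listed bottom-to-top) are encoded as
(start column, length) pairs. -/
def rowOf (D : List (ℕ × ℕ)) (i : ℕ) : ℕ × ℕ := D.getD i (0, 0)

/-- `D` encodes a skew diagram (a difference of Young diagrams, rows listed from
bottom to top): all rows are nonempty and, going up, both the left ends and the
right ends of the rows move weakly to the left. -/
def IsSkewRows (D : List (ℕ × ℕ)) : Prop :=
  (∀ r ∈ D, 0 < r.2) ∧
  D.Chain' fun r r' => r'.1 ≤ r.1 ∧ r'.1 + r'.2 ≤ r.1 + r.2

/-- Cell in row `i` (from the bottom), column `j`, belongs to the diagram `D`. -/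
def InDiag (D : List (ℕ × ℕ)) (i j : ℕ) : Prop :=
  i < D.length ∧ (rowOf D i).1 ≤ j ∧ j < (rowOf D i).1 + (rowOf D i).2

/-- The arm of a cell: the number of cells of `D` strictly to its east. -/
def armLen (D : List (ℕ × ℕ)) (i j : ℕ) : ℕ :=
  (rowOf D i).1 + (rowOf D i).2 - 1 - j

/-- The leg of a cell: the number of cells of `D` strictly to its north. -/
def legLen (D : List (ℕ × ℕ)) (i j : ℕ) : ℕ :=
  ((Finset.range D.length).filter fun i' =>
    i < i' ∧ (rowOf D i').1 ≤ j ∧ j < (rowOf D i').1 + (rowOf D i').2).card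

/-- The hook-length of a cell of `D`. -/
def hookLen (D : List (ℕ × ℕ)) (i j : ℕ) : ℕ := armLen D i j + legLen D i j + 1

/-- All hook-lengths of `D` are at most `k`. -/
def HookBounded (k : ℕ) (D : List (ℕ × ℕ)) : Prop :=
  ∀ i j, InDiag D i j → hookLen D i j ≤ k

/-- Shift `D` one column to the right and adjoin a new column of `m` cells in
column `0`, occupying the `m` consecutive rows `h, …, h + m - 1`. -/
def addCol (m h : ℕ) (D : List (ℕ × ℕ)) : List (ℕ × ℕ) :=
  (List.range (max D.length (h + m))).map fun i =>
    if h ≤ i ∧ i < h + m then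
      if i < D.length then (0, (rowOf D i).1 + (rowOf D i).2 + 1) else (0, 1)
    else ((rowOf D i).1 + 1, (rowOf D i).2)

/-- The placement of the new column at height `h` yields a genuine skew diagram
(rows stay contiguous) whose hook-lengths are bounded by `k`. -/
def ColValid (k m h : ℕ) (D : List (ℕ × ℕ)) : Prop :=
  (∀ i, h ≤ i → i < h + m → i < D.length → (rowOf D i).1 = 0) ∧
  IsSkewRows (addCol m h D) ∧ HookBounded k (addCol m h D)

/-- `k`-multiplication `m ×^{(k)} D`: adjoin a first column of length `m` to `D`
so that the result is a skew diagram with hook-lengths bounded by `k`, having as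
few rows as possible (the valid placement heights `h` all satisfy
`h + m ≥ number of rows`, so the lowest valid placement has fewest rows). -/
noncomputable def kMul (k m : ℕ) (D : List (ℕ × ℕ)) : List (ℕ × ℕ) :=
  addCol m (sInf {h | ColValid k m h D}) D

/-- `D(λ)`: the skew diagram obtained by `k`-multiplying the parts of `λ` from
right to left, the innermost part giving a single column. -/
noncomputable def kSkewDiagram (k : ℕ) : List ℕ → List (ℕ × ℕ)
  | [] => []
  | m :: rest => kMul k m (kSkewDiagram k rest)

/-- The `k`-conjugate `λ^{ω_k}`: the row lengths of `D(λ)`, read from the bottom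
row to the top row. -/
noncomputable def kConjugate (k : ℕ) (l : List ℕ) : List ℕ :=
  (kSkewDiagram k l).map Prod.snd


/-! ### Auxiliary development for the involution theorem -/

open Finset

noncomputable section KCAux

/-- start of row `i` -/
def kcS (D : List (ℕ × ℕ)) (i : ℕ) : ℕ := (rowOf D i).1
/-- end (one past last column) of row `i` -/
def kcE (D : List (ℕ × ℕ)) (i : ℕ) : ℕ := (rowOf D i).1 + (rowOf D i).2
/-- length of row `i` -/
def kcL (D : List (ℕ × ℕ)) (i : ℕ) : ℕ := (rowOf D i).2

lemma rowOf_eq_getElem (D : List (ℕ × ℕ)) (i : ℕ) (h : i < D.length) :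
    rowOf D i = D[i] := List.getD_eq_getElem D (0,0) h

lemma rowOf_default (D : List (ℕ × ℕ)) (i : ℕ) (h : D.length ≤ i) :
    rowOf D i = (0, 0) := List.getD_eq_default D (0,0) h

lemma kcE_def (D : List (ℕ × ℕ)) (i : ℕ) : kcE D i = kcS D i + kcL D i := rfl

lemma InDiag_iff (D : List (ℕ × ℕ)) (i j : ℕ) :
    InDiag D i j ↔ i < D.length ∧ kcS D i ≤ j ∧ j < kcE D i := Iff.rfl

/-- rows are nonempty and adjacent rows are skew-stacked -/
lemma isSkewRows_iff (D : List (ℕ × ℕ)) :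
    IsSkewRows D ↔ (∀ i, i < D.length → 0 < kcL D i) ∧
      (∀ i, i + 1 < D.length → kcS D (i+1) ≤ kcS D i ∧ kcE D (i+1) ≤ kcE D i) := by
  constructor
  · rintro ⟨h1, h2⟩
    constructor
    · intro i hi
      have := h1 (D[i]) (List.getElem_mem hi)
      rwa [kcL, rowOf_eq_getElem D i hi]
    · intro i hi
      have h2' := List.isChain_iff_getElem.mp h2 i (by omega)
      have e1 : i < D.length := by omega
      rw [kcS, kcS, kcE, kcE, rowOf_eq_getElem D i e1, rowOf_eq_getElem D (i+1) hi]
      exact ⟨h2'.1, h2'.2⟩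
  · rintro ⟨h1, h2⟩
    constructor
    · intro r hr
      rcases List.getElem_of_mem hr with ⟨i, hi, rfl⟩
      have := h1 i hi
      rwa [kcL, rowOf_eq_getElem D i hi] at this
    · refine List.isChain_iff_getElem.mpr ?_
      intro i hi
      have hi' : i + 1 < D.length := by omega
      have := h2 i hi'
      rw [kcS, kcS, kcE, kcE, rowOf_eq_getElem D i (by omega), rowOf_eq_getElem D (i+1) hi'] at this
      exact this

lemma kcL_pos (hsk : IsSkewRows D) (hi : i < D.length) : 0 < kcL D i :=
  ((isSkewRows_iff D).mp hsk).1 i hi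

lemma kcS_anti (hsk : IsSkewRows D) (h : i ≤ i') (hi' : i' < D.length) :
    kcS D i' ≤ kcS D i := by
  obtain ⟨d, rfl⟩ := Nat.exists_eq_add_of_le h
  clear h
  induction d with
  | zero => exact le_refl _
  | succ n ih =>
    have h1 : i + n + 1 < D.length := by omega
    have h2 := (((isSkewRows_iff D).mp hsk).2 (i+n) h1).1
    have h3 := ih (by omega)
    calc kcS D (i + (n+1)) = kcS D (i + n + 1) := by ring_nf
      _ ≤ kcS D (i + n) := h2
      _ ≤ kcS D i := h3

lemma kcE_anti (hsk : IsSkewRows D) (h : i ≤ i') (hi' : i' < D.length) :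
    kcE D i' ≤ kcE D i := by
  obtain ⟨d, rfl⟩ := Nat.exists_eq_add_of_le h
  clear h
  induction d with
  | zero => exact le_refl _
  | succ n ih =>
    have h1 : i + n + 1 < D.length := by omega
    have h2 := (((isSkewRows_iff D).mp hsk).2 (i+n) h1).2
    have h3 := ih (by omega)
    calc kcE D (i + (n+1)) = kcE D (i + n + 1) := by ring_nf
      _ ≤ kcE D (i + n) := h2
      _ ≤ kcE D i := h3


/-! ### Columns -/

attribute [local instance] Classical.propDecidable

def colSet (D : List (ℕ × ℕ)) (j : ℕ) : Finset ℕ :=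
  (Finset.range D.length).filter (fun i => InDiag D i j)
noncomputable def colBase (D : List (ℕ × ℕ)) (j : ℕ) : ℕ := sInf {i | InDiag D i j}
def colTop (D : List (ℕ × ℕ)) (j : ℕ) : ℕ := (colSet D j).sup (fun i => i + 1)
def colLen (D : List (ℕ × ℕ)) (j : ℕ) : ℕ := (colSet D j).card

lemma mem_colSet_iff (D : List (ℕ × ℕ)) (i j : ℕ) : i ∈ colSet D j ↔ InDiag D i j := by
  simp only [colSet, Finset.mem_filter, Finset.mem_range]
  exact ⟨fun h => h.2, fun h => ⟨h.1, h⟩⟩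

lemma colTop_le_length (D : List (ℕ × ℕ)) (j : ℕ) : colTop D j ≤ D.length := by
  apply Finset.sup_le
  intro i hi
  rw [mem_colSet_iff] at hi
  exact hi.1

lemma inDiag_of_between (hsk : IsSkewRows D) (h1 : InDiag D i1 j) (h3 : InDiag D i3 j)
    (h12 : i1 ≤ i2) (h23 : i2 ≤ i3) : InDiag D i2 j := by
  rw [InDiag_iff] at *
  refine ⟨by omega, le_trans (kcS_anti hsk h12 (by omega)) h1.2.1, ?_⟩
  exact lt_of_lt_of_le h3.2.2 (kcE_anti hsk h23 (by omega))

lemma colSet_eq_Ico (hsk : IsSkewRows D) (j : ℕ) :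
    colSet D j = Finset.Ico (colBase D j) (colTop D j) := by
  ext x
  rw [mem_colSet_iff, Finset.mem_Ico]
  constructor
  · intro hx
    refine ⟨Nat.sInf_le hx, ?_⟩
    have := Finset.le_sup (f := fun i => i + 1) ((mem_colSet_iff D x j).mpr hx)
    exact lt_of_lt_of_le (Nat.lt_succ_self x) this
  · rintro ⟨h1, h2⟩
    have hne : (colSet D j).Nonempty := by
      by_contra hc
      rw [Finset.not_nonempty_iff_eq_empty] at hc
      unfold colTop at h2
      rw [hc] at h2
      simp at h2
    obtain ⟨y, hy, hyt⟩ := Finset.exists_mem_eq_sup _ hne (fun i => i + 1)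
    rw [mem_colSet_iff] at hy
    have hbase : InDiag D (colBase D j) j := by
      apply Nat.sInf_mem (s := {i | InDiag D i j})
      exact ⟨y, hy⟩
    have hxy : x ≤ y := by
      have h2' : x < (colSet D j).sup (fun i => i + 1) := h2
      omega
    exact inDiag_of_between hsk hbase hy h1 hxy

lemma InDiag_iff_col (hsk : IsSkewRows D) (i j : ℕ) :
    InDiag D i j ↔ colBase D j ≤ i ∧ i < colTop D j := by
  rw [← mem_colSet_iff, colSet_eq_Ico hsk, Finset.mem_Ico]

lemma colLen_eq (hsk : IsSkewRows D) (j : ℕ) :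
    colLen D j = colTop D j - colBase D j := by
  rw [colLen, colSet_eq_Ico hsk, Nat.card_Ico]

lemma colBase_add_colLen (hsk : IsSkewRows D) (hne : InDiag D i j) :
    colBase D j + colLen D j = colTop D j := by
  have h1 : colBase D j ≤ i ∧ i < colTop D j := (InDiag_iff_col hsk i j).mp hne
  rw [colLen_eq hsk]
  omega

lemma legLen_eq_filter (D : List (ℕ × ℕ)) (i j : ℕ) :
    legLen D i j = ((colSet D j).filter (fun i' => i < i')).card := by
  rw [legLen]
  congr 1
  ext x
  simp only [Finset.mem_filter, Finset.mem_range, mem_colSet_iff, InDiag]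
  tauto

lemma legLen_eq (hsk : IsSkewRows D) (hin : InDiag D i j) :
    legLen D i j = colTop D j - (i + 1) := by
  rw [legLen_eq_filter, colSet_eq_Ico hsk]
  have h1 : colBase D j ≤ i := ((InDiag_iff_col hsk i j).mp hin).1
  have : (Finset.Ico (colBase D j) (colTop D j)).filter (fun i' => i < i') =
      Finset.Ico (i+1) (colTop D j) := by
    ext x
    simp only [Finset.mem_filter, Finset.mem_Ico]
    omega
  rw [this, Nat.card_Ico]

lemma armLen_eq (D : List (ℕ × ℕ)) (i j : ℕ) : armLen D i j = kcE D i - 1 - j := rfl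

lemma hookLen_eq (hsk : IsSkewRows D) (hin : InDiag D i j) :
    hookLen D i j = (kcE D i - 1 - j) + (colTop D j - (i + 1)) + 1 := by
  rw [hookLen, armLen_eq, legLen_eq hsk hin]


/-! ### addCol access lemmas -/

lemma length_addCol (m h : ℕ) (D : List (ℕ × ℕ)) :
    (addCol m h D).length = max D.length (h + m) := by
  simp [addCol]

lemma rowOf_addCol (m h : ℕ) (D : List (ℕ × ℕ)) (i : ℕ) (hi : i < max D.length (h + m)) :
    rowOf (addCol m h D) i =
      if h ≤ i ∧ i < h + m then
        (if i < D.length then (0, (rowOf D i).1 + (rowOf D i).2 + 1) else (0, 1))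
      else ((rowOf D i).1 + 1, (rowOf D i).2) := by
  have hi' : i < (addCol m h D).length := by rw [length_addCol]; exact hi
  rw [rowOf, List.getD_eq_getElem _ _ hi']
  simp only [addCol, List.getElem_map, List.getElem_range]

lemma kcS_addCol (h1 : h ≤ D.length) (h2 : D.length ≤ h + m) (hi : i < h + m) :
    kcS (addCol m h D) i = if h ≤ i then 0 else kcS D i + 1 := by
  rw [kcS, rowOf_addCol m h D i (by omega)]
  by_cases hc : h ≤ i
  · simp only [hc, hi, and_self, if_true]
    split_ifs <;> rfl
  · simp only [hc, false_and, if_false, if_neg hc]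
    rfl

lemma kcE_addCol (h1 : h ≤ D.length) (h2 : D.length ≤ h + m) (hi : i < h + m) :
    kcE (addCol m h D) i = if i < D.length then kcE D i + 1 else 1 := by
  rw [kcE, rowOf_addCol m h D i (by omega)]
  by_cases hc : h ≤ i
  · simp only [hc, hi, and_self, if_true]
    split_ifs with hl
    · simp [kcE]
    · rfl
  · have hl : i < D.length := by omega
    simp only [hc, false_and, if_false, if_pos hl]
    simp [kcE]
    ring

lemma kcL_addCol (h1 : h ≤ D.length) (h2 : D.length ≤ h + m) (hi : i < h + m) :
    kcL (addCol m h D) i = kcE (addCol m h D) i - kcS (addCol m h D) i := by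
  rw [kcE_def]; omega

lemma InDiag_addCol (h1 : h ≤ D.length) (h2 : D.length ≤ h + m)
    (hcond : ∀ i, h ≤ i → i < D.length → kcS D i = 0) (i j : ℕ) :
    InDiag (addCol m h D) i j ↔
      ((j = 0 ∧ h ≤ i ∧ i < h + m) ∨ (1 ≤ j ∧ InDiag D i (j - 1))) := by
  have hlenA : (addCol m h D).length = h + m := by rw [length_addCol]; omega
  by_cases hi : i < h + m
  · rw [InDiag_iff, hlenA, kcE_def, kcS_addCol h1 h2 hi, kcL_addCol h1 h2 hi,
      kcS_addCol h1 h2 hi, kcE_addCol h1 h2 hi]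
    rw [InDiag_iff (D := D), kcE_def]
    by_cases hc : h ≤ i
    · by_cases hl : i < D.length
      · have h0 : kcS D i = 0 := hcond i hc hl
        simp only [if_pos hc, if_pos hl, kcE_def, h0]
        have hp : 0 < kcL D i ∨ 0 ≤ kcL D i := Or.inr (Nat.zero_le _)
        constructor
        · rintro ⟨-, -, hj⟩
          by_cases hj0 : j = 0
          · exact Or.inl ⟨hj0, hc, hi⟩
          · right
            constructor
            · omega
            · refine ⟨hl, by omega, by omega⟩
        · rintro (⟨rfl, -, -⟩ | ⟨hj1, -, hs, hE⟩) <;> omega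
      · simp only [if_pos hc, if_neg hl]
        constructor
        · rintro ⟨-, -, hj⟩
          exact Or.inl ⟨by omega, hc, hi⟩
        · rintro (⟨rfl, -, -⟩ | ⟨hj1, hil, -⟩)
          · omega
          · omega
      all_goals omega
    · have hl : i < D.length := by omega
      simp only [if_neg hc, if_pos hl]
      constructor
      · rintro ⟨-, hs, hE⟩
        right
        refine ⟨by omega, hl, by omega, by omega⟩
      · rintro (⟨-, hhi, -⟩ | ⟨hj1, -, hs, hE⟩) <;> omega
  · constructor
    · rintro ⟨hlen, -⟩
      rw [hlenA] at hlen
      omega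
    · rintro (⟨-, -, him⟩ | ⟨-, hil, -, -⟩)
      · exact absurd him hi
      · exact absurd (show i < h + m by omega) hi

lemma colSet_addCol_succ (h1 : h ≤ D.length) (h2 : D.length ≤ h + m)
    (hcond : ∀ i, h ≤ i → i < D.length → kcS D i = 0) (j : ℕ) :
    colSet (addCol m h D) (j + 1) = colSet D j := by
  ext x
  rw [mem_colSet_iff, mem_colSet_iff, InDiag_addCol h1 h2 hcond]
  simp only [Nat.add_sub_cancel]
  constructor
  · rintro (⟨h0, -⟩ | ⟨-, hx⟩)
    · exact absurd h0 (by omega)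
    · exact hx
  · intro hx
    exact Or.inr ⟨by omega, hx⟩


lemma colSet_addCol_zero (h1 : h ≤ D.length) (h2 : D.length ≤ h + m)
    (hcond : ∀ i, h ≤ i → i < D.length → kcS D i = 0) :
    colSet (addCol m h D) 0 = Finset.Ico h (h + m) := by
  ext x
  rw [mem_colSet_iff, InDiag_addCol h1 h2 hcond, Finset.mem_Ico]
  constructor
  · rintro (⟨-, hx⟩ | ⟨hx, -⟩)
    · exact hx
    · exact absurd hx (by omega)
  · intro hx
    exact Or.inl ⟨rfl, hx⟩

lemma colTop_addCol_zero (h1 : h ≤ D.length) (h2 : D.length ≤ h + m) (hm : 0 < m)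
    (hcond : ∀ i, h ≤ i → i < D.length → kcS D i = 0) :
    colTop (addCol m h D) 0 = h + m := by
  rw [colTop, colSet_addCol_zero h1 h2 hcond]
  apply le_antisymm
  · apply Finset.sup_le
    intro b hb
    rw [Finset.mem_Ico] at hb
    omega
  · have : h + m - 1 ∈ Finset.Ico h (h + m) := by rw [Finset.mem_Ico]; omega
    have h3 : h + m - 1 + 1 ≤ (Finset.Ico h (h + m)).sup (fun i => i + 1) :=
      Finset.le_sup (f := fun i => i + 1) this
    omega

lemma colBase_addCol_zero (h1 : h ≤ D.length) (h2 : D.length ≤ h + m) (hm : 0 < m)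
    (hcond : ∀ i, h ≤ i → i < D.length → kcS D i = 0) :
    colBase (addCol m h D) 0 = h := by
  have hset : {i | InDiag (addCol m h D) i 0} = Set.Ico h (h + m) := by
    ext x
    rw [Set.mem_setOf_eq, InDiag_addCol h1 h2 hcond, Set.mem_Ico]
    constructor
    · rintro (⟨-, hx⟩ | ⟨hx, -⟩)
      · exact hx
      · exact absurd hx (by omega)
    · intro hx
      exact Or.inl ⟨rfl, hx⟩
  rw [colBase, hset]
  apply le_antisymm
  · exact Nat.sInf_le (by rw [Set.mem_Ico]; omega)
  · have hne : (Set.Ico h (h + m)).Nonempty := ⟨h, by rw [Set.mem_Ico]; omega⟩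
    have := Nat.sInf_mem hne
    rw [Set.mem_Ico] at this
    exact this.1

lemma colBase_addCol_succ (h1 : h ≤ D.length) (h2 : D.length ≤ h + m)
    (hcond : ∀ i, h ≤ i → i < D.length → kcS D i = 0) (j : ℕ) :
    colBase (addCol m h D) (j + 1) = colBase D j := by
  rw [colBase, colBase]
  congr 1
  ext x
  rw [Set.mem_setOf_eq, Set.mem_setOf_eq, InDiag_addCol h1 h2 hcond]
  simp only [Nat.add_sub_cancel]
  constructor
  · rintro (⟨h0, -⟩ | ⟨-, hx⟩)
    · exact absurd h0 (by omega)
    · exact hx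
  · intro hx
    exact Or.inr ⟨by omega, hx⟩

lemma colTop_addCol_succ (h1 : h ≤ D.length) (h2 : D.length ≤ h + m)
    (hcond : ∀ i, h ≤ i → i < D.length → kcS D i = 0) (j : ℕ) :
    colTop (addCol m h D) (j + 1) = colTop D j := by
  rw [colTop, colTop, colSet_addCol_succ h1 h2 hcond]

lemma colLen_addCol_succ (h1 : h ≤ D.length) (h2 : D.length ≤ h + m)
    (hcond : ∀ i, h ≤ i → i < D.length → kcS D i = 0) (j : ℕ) :
    colLen (addCol m h D) (j + 1) = colLen D j := by
  rw [colLen, colLen, colSet_addCol_succ h1 h2 hcond]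

/-! ### The construction lemma: validity of a placement -/

lemma colValid_of (hsk : IsSkewRows D) (hhk : HookBounded k D) (hm : 0 < m) (hmk : m ≤ k)
    (hle : h ≤ D.length) (hcond : ∀ i, h ≤ i → i < D.length → kcS D i = 0)
    (hlen : D.length ≤ h + m) (hhook : h < D.length → kcE D h + m ≤ k) :
    ColValid k m h D := by
  have hlenA : (addCol m h D).length = h + m := by rw [length_addCol]; omega
  have hpos : ∀ i, i < D.length → 0 < kcL D i := fun i hi => kcL_pos hsk hi
  have hskA : IsSkewRows (addCol m h D) := by
    rw [isSkewRows_iff]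
    constructor
    · intro i hi
      rw [hlenA] at hi
      rw [kcL_addCol hle hlen hi, kcS_addCol hle hlen hi, kcE_addCol hle hlen hi]
      by_cases hil : i < D.length
      · have hp := hpos i hil
        have hEd : kcE D i = kcS D i + kcL D i := kcE_def D i
        rw [if_pos hil]
        split_ifs <;> omega
      · have hhi : h ≤ i := by omega
        rw [if_neg hil, if_pos hhi]
        omega
    · intro i hi
      rw [hlenA] at hi
      have hi1 : i < h + m := by omega
      rw [kcS_addCol hle hlen hi, kcS_addCol hle hlen hi1,
        kcE_addCol hle hlen hi, kcE_addCol hle hlen hi1]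
      have hE1 : ∀ i', i' < D.length → 1 ≤ kcE D i' := by
        intro i' hh
        have := hpos i' hh
        have hEd : kcE D i' = kcS D i' + kcL D i' := kcE_def D i'
        omega
      by_cases hil1 : i + 1 < D.length
      · have hSadj := ((isSkewRows_iff D).mp hsk).2 i hil1
        have h1 := hE1 i (by omega)
        have h2 := hE1 (i+1) hil1
        constructor
        · split_ifs <;> omega
        · split_ifs <;> omega
      · have hgei : h ≤ i + 1 := by omega
        by_cases hil : i < D.length
        · have h1 := hE1 i hil
          constructor
          · split_ifs <;> omega
          · split_ifs <;> omega
        · constructor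
          · split_ifs <;> omega
          · split_ifs <;> omega
  refine ⟨fun i hi1 hi2 hi3 => hcond i hi1 hi3, hskA, ?_⟩
  intro i j hin
  have hcase := (InDiag_addCol hle hlen hcond i j).mp hin
  rcases hcase with ⟨rfl, hi1, hi2⟩ | ⟨hj1, hinD⟩
  · -- new cell in column 0
    have harm : armLen (addCol m h D) i 0 = kcE (addCol m h D) i - 1 := by
      rw [armLen_eq]
      omega
    have hleg : legLen (addCol m h D) i 0 = h + m - (i + 1) := by
      rw [legLen_eq hskA hin, colTop_addCol_zero hle hlen hm hcond]
    rw [hookLen, harm, hleg, kcE_addCol hle hlen hi2]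
    split_ifs with hil
    · have h1 : kcE D i ≤ kcE D h := kcE_anti hsk hi1 hil
      have h2 : kcE D h + m ≤ k := hhook (by omega)
      omega
    · omega
  · -- old cell shifted right
    have hilD : i < D.length := hinD.1
    have harm : armLen (addCol m h D) i j = armLen D i (j - 1) := by
      rw [armLen_eq, armLen_eq, kcE_addCol hle hlen (by omega)]
      rw [if_pos hilD]
      have : kcS D i ≤ j - 1 ∧ j - 1 < kcE D i := ⟨hinD.2.1, hinD.2.2⟩
      omega
    have hleg : legLen (addCol m h D) i j = legLen D i (j - 1) := by
      rw [legLen_eq_filter, legLen_eq_filter]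
      obtain ⟨j', rfl⟩ : ∃ j', j = j' + 1 := ⟨j - 1, by omega⟩
      rw [colSet_addCol_succ hle hlen hcond]
      simp only [Nat.add_sub_cancel]
    rw [hookLen, harm, hleg]
    exact hhk i (j - 1) hinD

/-! ### Necessary conditions for a valid placement -/

lemma pieces_of_colValid (hsk : IsSkewRows D) (hm : 0 < m) (hv : ColValid k m h D) :
    h ≤ D.length ∧ D.length ≤ h + m ∧ (h < D.length → kcE D h + m ≤ k) := by
  obtain ⟨hcond, hskA, hhkA⟩ := hv
  have ha : h ≤ D.length := by
    by_contra hc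
    push_neg at hc
    have hlt : D.length < (addCol m h D).length := by rw [length_addCol]; omega
    have := kcL_pos hskA hlt
    rw [kcL, rowOf_addCol m h D D.length (by rw [← length_addCol]; exact hlt)] at this
    rw [if_neg (by omega), rowOf_default D D.length (le_refl _)] at this
    simp at this
  have hb : D.length ≤ h + m := by
    by_contra hc
    push_neg at hc
    have hlenA : (addCol m h D).length = D.length := by rw [length_addCol]; omega
    have hadj := ((isSkewRows_iff _).mp hskA).2 (h + m - 1) (by omega)
    have he : h + m - 1 + 1 = h + m := by omega
    rw [he] at hadj
    have e1 : kcS (addCol m h D) (h + m) = kcS D (h + m) + 1 := by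
      rw [kcS, rowOf_addCol m h D (h + m) (by omega), if_neg (by omega)]
      rfl
    have e2 : kcS (addCol m h D) (h + m - 1) = 0 := by
      rw [kcS, rowOf_addCol m h D (h + m - 1) (by omega),
        if_pos ⟨(by omega : h ≤ h + m - 1), (by omega : h + m - 1 < h + m)⟩]
      split_ifs <;> rfl
    have := hadj.1
    omega
  refine ⟨ha, hb, ?_⟩
  intro hlt
  have hcond' : ∀ i, h ≤ i → i < D.length → kcS D i = 0 :=
    fun i hi1 hi2 => hcond i hi1 (by omega) hi2
  have hin : InDiag (addCol m h D) h 0 := by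
    rw [InDiag_addCol ha hb hcond']
    exact Or.inl ⟨rfl, le_refl _, by omega⟩
  have hhk := hhkA h 0 hin
  rw [hookLen, armLen_eq, legLen_eq hskA hin, colTop_addCol_zero ha hb hm hcond',
    kcE_addCol ha hb (by omega), if_pos hlt] at hhk
  have hE1 : 1 ≤ kcE D h := by
    have := kcL_pos hsk hlt; rw [kcE_def]; omega
  omega


/-! ### Transpose -/

noncomputable def transposeD (D : List (ℕ × ℕ)) : List (ℕ × ℕ) :=
  (List.range (kcE D 0)).map (fun j => (colBase D j, colLen D j))

lemma length_transposeD (D : List (ℕ × ℕ)) : (transposeD D).length = kcE D 0 := by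
  simp [transposeD]

lemma rowOf_transposeD (D : List (ℕ × ℕ)) (j : ℕ) (hj : j < kcE D 0) :
    rowOf (transposeD D) j = (colBase D j, colLen D j) := by
  have hj' : j < (transposeD D).length := by rw [length_transposeD]; exact hj
  rw [rowOf, List.getD_eq_getElem _ _ hj']
  simp only [transposeD, List.getElem_map, List.getElem_range]

/-- The invariant bundle carried through the construction of `D(λ)`. -/
def KCP (k : ℕ) (l : List ℕ) (D : List (ℕ × ℕ)) : Prop :=
  IsSkewRows D ∧ HookBounded k D ∧
  (D.length = 0 ↔ l = []) ∧
  kcE D 0 = l.length ∧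
  (D ≠ [] → kcS D (D.length - 1) = 0) ∧
  (∀ j, j < l.length → ∀ i, InDiag D i j ↔ colBase D j ≤ i ∧ i < colBase D j + l.getD j 0) ∧
  (∀ i, i < D.length → ∀ j, j < kcS D i → k + 3 + i + j ≤ kcE D i + colTop D j) ∧
  (∀ i, i + 1 < D.length → kcL D (i+1) ≤ kcL D i)

lemma kcp_base (k : ℕ) : KCP k [] [] := by
  refine ⟨⟨by simp, List.isChain_nil⟩, ?_, by simp, rfl, by simp, ?_, ?_, ?_⟩
  · intro i j hin
    exact absurd hin.1 (by simp)
  · intro j hj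
    simp at hj
  · intro i hi
    simp at hi
  · intro i hi
    simp at hi

section KCPFacts

variable {k : ℕ} {l : List ℕ} {D : List (ℕ × ℕ)}

lemma kcp_col_facts (hp : KCP k l D) (hpos : ∀ x ∈ l, 0 < x) (j : ℕ) (hj : j < l.length) :
    InDiag D (colBase D j) j ∧ colTop D j = colBase D j + l.getD j 0 ∧
      colLen D j = l.getD j 0 := by
  obtain ⟨hsk, -, -, -, -, h6, -, -⟩ := hp
  have hlj : 0 < l.getD j 0 := by
    rw [List.getD_eq_getElem l 0 hj]
    exact hpos _ (List.getElem_mem hj)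
  have hbase : InDiag D (colBase D j) j := by
    rw [h6 j hj]
    omega
  have h1 : colBase D j + l.getD j 0 ≤ colTop D j := by
    have : InDiag D (colBase D j + l.getD j 0 - 1) j := by rw [h6 j hj]; omega
    have := ((InDiag_iff_col hsk _ j).mp this).2
    omega
  have h2 : colTop D j ≤ colBase D j + l.getD j 0 := by
    have hlt : colBase D j < colTop D j := ((InDiag_iff_col hsk _ j).mp hbase).2
    have : InDiag D (colTop D j - 1) j := by
      rw [InDiag_iff_col hsk]
      omega
    rw [h6 j hj] at this
    omega
  have htop : colTop D j = colBase D j + l.getD j 0 := le_antisymm h2 h1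
  refine ⟨hbase, htop, ?_⟩
  rw [colLen_eq hsk, htop]
  have : colBase D j ≤ colBase D j + l.getD j 0 := by omega
  omega

lemma kcp_colTop_zero (hp : KCP k l D) (hD : D ≠ []) : colTop D 0 = D.length := by
  obtain ⟨hsk, -, -, -, h5, -, -, -⟩ := hp
  have hlen : 0 < D.length := List.length_pos_iff.mpr hD
  have hin : InDiag D (D.length - 1) 0 := by
    rw [InDiag_iff]
    have := kcL_pos hsk (show D.length - 1 < D.length by omega)
    have hS := h5 hD
    rw [kcE_def]
    omega
  have h1 : D.length ≤ colTop D 0 := by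
    have := ((InDiag_iff_col hsk _ 0).mp hin).2
    omega
  exact le_antisymm (colTop_le_length D 0) h1

lemma kcp_rows_le (hp : KCP k l D) (hk : 0 < k) (i : ℕ) (hi : i < D.length) :
    kcL D i ≤ k := by
  obtain ⟨hsk, hhk, -, -, -, -, -, -⟩ := hp
  have hpos := kcL_pos hsk hi
  have hin : InDiag D i (kcS D i) := by
    rw [InDiag_iff, kcE_def]
    omega
  have := hhk i (kcS D i) hin
  rw [hookLen, armLen_eq, kcE_def] at this
  omega

end KCPFacts


/-! ### The constructed diagram satisfies the invariants -/

lemma kcp_step {k m : ℕ} {rest : List ℕ} {D : List (ℕ × ℕ)}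
    (hl : IsKBoundedPartition k (m :: rest)) (hp : KCP k rest D) :
    KCP k (m :: rest) (kMul k m D) := by
  obtain ⟨⟨hsort, hposl⟩, hbdd⟩ := hl
  obtain ⟨hsk, hhk, h3, h4, h5, h6, h7, h8⟩ := hp
  have hp' : KCP k rest D := ⟨hsk, hhk, h3, h4, h5, h6, h7, h8⟩
  have hm : 0 < m := hposl m (by simp)
  have hmk : m ≤ k := hbdd m (by simp)
  have hposrest : ∀ x ∈ rest, 0 < x := fun x hx => hposl x (by simp [hx])
  have hrest_le : ∀ x ∈ rest, x ≤ m := by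
    rw [List.pairwise_cons] at hsort
    exact fun x hx => hsort.1 x hx
  unfold kMul
  set h := sInf {h' | ColValid k m h' D} with hh
  have hne : ColValid k m D.length D :=
    colValid_of hsk hhk hm hmk le_rfl (fun i a b => by omega) (by omega) (fun c => by omega)
  have hv : ColValid k m h D := by
    have hmem := Nat.sInf_mem (s := {h' | ColValid k m h' D}) ⟨D.length, hne⟩
    rw [← hh] at hmem
    exact hmem
  obtain ⟨hhle, hhlen, hhook⟩ := pieces_of_colValid hsk hm hv
  have hcond : ∀ i, h ≤ i → i < D.length → kcS D i = 0 := fun i a b => hv.1 i a (by omega) b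
  have hskA : IsSkewRows (addCol m h D) := hv.2.1
  have hhkA : HookBounded k (addCol m h D) := hv.2.2
  have hlenA : (addCol m h D).length = h + m := by rw [length_addCol]; omega
  have eS : ∀ i, i < h + m → kcS (addCol m h D) i = if h ≤ i then 0 else kcS D i + 1 :=
    fun i hi => kcS_addCol hhle hhlen hi
  have eE : ∀ i, i < h + m →
      kcE (addCol m h D) i = if i < D.length then kcE D i + 1 else 1 :=
    fun i hi => kcE_addCol hhle hhlen hi
  have eL : ∀ i, i < h + m →
      kcL (addCol m h D) i = kcE (addCol m h D) i - kcS (addCol m h D) i :=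
    fun i hi => kcL_addCol hhle hhlen hi
  -- the key minimality inequality
  have key : 0 < h → k + 1 ≤ kcL D (h - 1) + m := by
    intro h0
    have hlt : h - 1 < D.length := by omega
    have hEdef : kcE D (h-1) = kcS D (h-1) + kcL D (h-1) := kcE_def D (h-1)
    by_cases hS : kcS D (h - 1) = 0
    · by_contra hc
      push_neg at hc
      have hLE : kcE D (h-1) + m ≤ k := by omega
      have hDne : D ≠ [] := by
        intro hD0
        rw [hD0] at hlt
        simp at hlt
      have hrne : 0 < rest.length := by
        rcases rest with - | ⟨r, rs⟩
        · exact absurd (h3.mpr rfl) (by omega)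
        · simp
      obtain ⟨hbase0, htop0, hcl0⟩ := kcp_col_facts hp' hposrest 0 hrne
      have hwid : colTop D 0 = D.length := kcp_colTop_zero hp' hDne
      have hr1m : rest.getD 0 0 ≤ m := by
        have : rest.getD 0 0 ∈ rest := by
          rw [List.getD_eq_getElem rest 0 hrne]
          exact List.getElem_mem hrne
        exact hrest_le _ this
      have hin : InDiag D (h-1) 0 := by
        rw [InDiag_iff, kcE_def]
        have := kcL_pos hsk hlt
        omega
      have hble : colBase D 0 ≤ h - 1 := ((InDiag_iff_col hsk _ 0).mp hin).1
      have hlen' : D.length ≤ h - 1 + m := by omega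
      have hcond' : ∀ i, h - 1 ≤ i → i < D.length → kcS D i = 0 := by
        intro i ha hb
        rcases Nat.eq_or_lt_of_le ha with he | hlt2
        · rw [← he]; exact hS
        · exact hcond i (by omega) hb
      have hCV : ColValid k m (h-1) D :=
        colValid_of hsk hhk hm hmk (by omega) hcond' hlen' (fun _ => hLE)
      have hle2 := Nat.sInf_le (show (h-1) ∈ {h' | ColValid k m h' D} from hCV)
      rw [← hh] at hle2
      omega
    · have hcore := h7 (h-1) hlt (kcS D (h-1) - 1) (by omega)
      have htople : colTop D (kcS D (h-1) - 1) ≤ D.length := colTop_le_length D _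
      omega
  refine ⟨hskA, hhkA, ?_, ?_, ?_, ?_, ?_, ?_⟩
  · -- conj 3
    constructor
    · intro hc
      rw [hlenA] at hc
      omega
    · intro hc
      simp at hc
  · -- conj 4 : width
    have e0 := eE 0 (by omega)
    by_cases hD0 : 0 < D.length
    · rw [e0, if_pos hD0, h4]
      rfl
    · have : rest = [] := h3.mp (by omega)
      rw [e0, if_neg hD0, this]
      rfl
  · -- conj 5 : top row starts at 0
    intro hAne
    rw [hlenA]
    have := eS (h + m - 1) (by omega)
    rw [this, if_pos (by omega)]
  · -- conj 6 : columns
    intro j hj i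
    rcases j with - | j'
    · rw [colBase_addCol_zero hhle hhlen hm hcond, InDiag_addCol hhle hhlen hcond]
      simp only [List.getD_cons_zero]
      constructor
      · rintro (⟨-, hx⟩ | ⟨hx, -⟩)
        · exact hx
        · exact absurd hx (by omega)
      · intro hx
        exact Or.inl ⟨by trivial, hx⟩
    · simp only [List.length_cons] at hj
      have hj' : j' < rest.length := by omega
      rw [colBase_addCol_succ hhle hhlen hcond, InDiag_addCol hhle hhlen hcond]
      simp only [Nat.add_sub_cancel, List.getD_cons_succ]
      rw [← h6 j' hj' i]
      constructor
      · rintro (⟨hx, -⟩ | ⟨-, hx⟩)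
        · exact absurd hx (by omega)
        · exact hx
      · intro hx
        exact Or.inr ⟨by omega, hx⟩
  · -- conj 7 : core bound
    intro i hiA j hj
    rw [hlenA] at hiA
    rw [eS i hiA] at hj
    by_cases hc : h ≤ i
    · rw [if_pos hc] at hj
      omega
    · rw [if_neg hc] at hj
      push_neg at hc
      have hil : i < D.length := by omega
      have eEi : kcE (addCol m h D) i = kcE D i + 1 := by
        rw [eE i hiA, if_pos hil]
      rcases j with - | j'
      · rw [colTop_addCol_zero hhle hhlen hm hcond, eEi]
        have hkey := key (by omega)
        have hE1 : kcE D (h-1) ≤ kcE D i := kcE_anti hsk (by omega) (by omega)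
        have hEd : kcE D (h-1) = kcS D (h-1) + kcL D (h-1) := kcE_def D (h-1)
        omega
      · rw [colTop_addCol_succ hhle hhlen hcond, eEi]
        have := h7 i hil j' (by omega)
        omega
  · -- conj 8 : row lengths weakly decreasing
    intro i hi
    rw [hlenA] at hi
    rw [eL i (by omega), eL (i+1) hi]
    have eSi := eS i (by omega)
    have eSi1 := eS (i+1) hi
    have eEi := eE i (by omega)
    have eEi1 := eE (i+1) hi
    by_cases hc1 : h ≤ i
    · rw [if_pos hc1] at eSi
      rw [if_pos (by omega)] at eSi1
      by_cases hl1 : i + 1 < D.length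
      · have hadj := ((isSkewRows_iff D).mp hsk).2 i hl1
        rw [if_pos hl1] at eEi1
        rw [if_pos (by omega)] at eEi
        omega
      · rw [if_neg hl1] at eEi1
        by_cases hl0 : i < D.length
        · rw [if_pos hl0] at eEi
          omega
        · rw [if_neg hl0] at eEi
          omega
    · by_cases hc2 : h ≤ i + 1
      · -- i = h - 1
        have h0 : 0 < h := by omega
        have hieq : i = h - 1 := by omega
        subst hieq
        have hs1 : h - 1 + 1 = h := by omega
        rw [hs1] at eSi1 eEi1 ⊢
        rw [if_neg hc1] at eSi
        rw [if_pos (le_refl h)] at eSi1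
        rw [if_pos (by omega : h - 1 < D.length)] at eEi
        have hkey := key h0
        have hEd : kcE D (h-1) = kcS D (h-1) + kcL D (h-1) := kcE_def D (h-1)
        have hLpos := kcL_pos hsk (show h - 1 < D.length by omega)
        by_cases hl1 : h < D.length
        · rw [if_pos hl1] at eEi1
          have hhk2 := hhook hl1
          omega
        · rw [if_neg hl1] at eEi1
          omega
      · rw [if_neg hc1] at eSi
        rw [if_neg hc2] at eSi1
        have hl1 : i + 1 < D.length := by omega
        rw [if_pos hl1] at eEi1
        rw [if_pos (by omega)] at eEi
        have := h8 i hl1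
        have e1 : kcE D i = kcS D i + kcL D i := kcE_def D i
        have e2 : kcE D (i+1) = kcS D (i+1) + kcL D (i+1) := kcE_def D (i+1)
        omega

lemma kcp_kSkew (k : ℕ) (l : List ℕ) (hl : IsKBoundedPartition k l) :
    KCP k l (kSkewDiagram k l) := by
  induction l with
  | nil => exact kcp_base k
  | cons m rest ih =>
    have hrest : IsKBoundedPartition k rest := by
      obtain ⟨⟨hs, hpos⟩, hb⟩ := hl
      rw [List.pairwise_cons] at hs
      exact ⟨⟨hs.2, fun x hx => hpos x (by simp [hx])⟩, fun x hx => hb x (by simp [hx])⟩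
    exact kcp_step hl (ih hrest)


/-! ### Transpose facts -/

lemma InDiag_transposeD (hsk : IsSkewRows D) (i j : ℕ) :
    InDiag (transposeD D) j i ↔ InDiag D i j := by
  constructor
  · intro hin
    have hjw : j < kcE D 0 := by
      have := hin.1
      rwa [length_transposeD] at this
    rw [InDiag_iff, kcS, kcE, rowOf_transposeD D j hjw] at hin
    simp only at hin
    obtain ⟨-, hb, ht⟩ := hin
    have hne : (colSet D j).Nonempty := by
      rw [← Finset.card_pos, ← colLen]
      omega
    obtain ⟨y, hy⟩ := hne
    rw [mem_colSet_iff] at hy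
    have hbase : InDiag D (colBase D j) j := Nat.sInf_mem (⟨y, hy⟩ : {i | InDiag D i j}.Nonempty)
    have hbt : colBase D j + colLen D j = colTop D j := colBase_add_colLen hsk hbase
    rw [InDiag_iff_col hsk]
    omega
  · intro hin
    have hbase : InDiag D (colBase D j) j := Nat.sInf_mem (⟨i, hin⟩ : {i | InDiag D i j}.Nonempty)
    have hbt : colBase D j + colLen D j = colTop D j := colBase_add_colLen hsk hbase
    have hcol := (InDiag_iff_col hsk i j).mp hin
    have hjw : j < kcE D 0 := by
      have h1 : j < kcE D i := hin.2.2
      have h2 : kcE D i ≤ kcE D 0 := kcE_anti hsk (Nat.zero_le i) hin.1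
      omega
    rw [InDiag_iff, kcS, kcE, rowOf_transposeD D j hjw, length_transposeD]
    simp only
    omega

lemma colSet_transposeD (hsk : IsSkewRows D) (hi : i < D.length) :
    colSet (transposeD D) i = Finset.Ico (kcS D i) (kcE D i) := by
  ext j
  rw [mem_colSet_iff, InDiag_transposeD hsk, Finset.mem_Ico, InDiag_iff]
  omega

lemma colTop_transposeD (hsk : IsSkewRows D) (hi : i < D.length) :
    colTop (transposeD D) i = kcE D i := by
  rw [colTop, colSet_transposeD hsk hi]
  have hpos := kcL_pos hsk hi
  have hEd : kcE D i = kcS D i + kcL D i := kcE_def D i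
  apply le_antisymm
  · apply Finset.sup_le
    intro b hb
    rw [Finset.mem_Ico] at hb
    omega
  · have hmem : kcE D i - 1 ∈ Finset.Ico (kcS D i) (kcE D i) := by
      rw [Finset.mem_Ico]
      omega
    have h9 : kcE D i - 1 + 1 ≤ (Finset.Ico (kcS D i) (kcE D i)).sup (fun x => x + 1) :=
      Finset.le_sup (f := fun x => x + 1) hmem
    omega

lemma colBase_transposeD (hsk : IsSkewRows D) (hi : i < D.length) :
    colBase (transposeD D) i = kcS D i := by
  have hset : {j | InDiag (transposeD D) j i} = {j | kcS D i ≤ j ∧ j < kcE D i} := by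
    ext j
    rw [Set.mem_setOf_eq, Set.mem_setOf_eq, InDiag_transposeD hsk, InDiag_iff]
    omega
  rw [colBase, hset]
  have hpos := kcL_pos hsk hi
  have hEd : kcE D i = kcS D i + kcL D i := kcE_def D i
  apply le_antisymm
  · exact Nat.sInf_le (by constructor <;> omega)
  · have hne : {j | kcS D i ≤ j ∧ j < kcE D i}.Nonempty := ⟨kcS D i, by constructor <;> omega⟩
    have := Nat.sInf_mem hne
    exact this.1

lemma getD_map_snd (D : List (ℕ × ℕ)) (j : ℕ) (hj : j < D.length) :
    (D.map Prod.snd).getD j 0 = kcL D j := by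
  have hj' : j < (D.map Prod.snd).length := by simpa using hj
  rw [List.getD_eq_getElem _ _ hj', List.getElem_map, kcL, rowOf_eq_getElem D j hj]

lemma kcL_anti (h8 : ∀ i, i + 1 < D.length → kcL D (i+1) ≤ kcL D i)
    (h : i ≤ i') (hi' : i' < D.length) : kcL D i' ≤ kcL D i := by
  obtain ⟨d, rfl⟩ := Nat.exists_eq_add_of_le h
  clear h
  induction d with
  | zero => exact le_refl _
  | succ n ih =>
    have h1 : i + n + 1 < D.length := by omega
    have h2 := h8 (i+n) h1
    have h3 := ih (by omega)
    calc kcL D (i + (n+1)) = kcL D (i + n + 1) := by ring_nf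
      _ ≤ kcL D (i + n) := h2
      _ ≤ kcL D i := h3

lemma kcp_rows_kbounded (hp : KCP k l D) (hk : 0 < k) :
    IsKBoundedPartition k (D.map Prod.snd) := by
  obtain ⟨hsk, hhk, h3, h4, h5, h6, h7, h8⟩ := hp
  have hp' : KCP k l D := ⟨hsk, hhk, h3, h4, h5, h6, h7, h8⟩
  refine ⟨⟨?_, ?_⟩, ?_⟩
  · rw [List.pairwise_iff_get]
    intro a b hab
    simp only [List.get_eq_getElem, List.getElem_map]
    have hb : (b : ℕ) < D.length := by
      have := b.2
      simpa using this
    have ha : (a : ℕ) < D.length := by omega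
    have := kcL_anti h8 (le_of_lt hab) hb
    rw [kcL, kcL, rowOf_eq_getElem D a ha, rowOf_eq_getElem D b hb] at this
    exact this
  · intro x hx
    rw [List.mem_map] at hx
    obtain ⟨r, hr, rfl⟩ := hx
    exact hsk.1 r hr
  · intro x hx
    rw [List.mem_map] at hx
    obtain ⟨r, hr, rfl⟩ := hx
    obtain ⟨j, hj, rfl⟩ := List.getElem_of_mem hr
    have := kcp_rows_le hp' hk j hj
    rwa [kcL, rowOf_eq_getElem D j hj] at this

lemma map_snd_transposeD (hp : KCP k l D) (hpos : ∀ x ∈ l, 0 < x) :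
    (transposeD D).map Prod.snd = l := by
  have h4 := hp.2.2.2.1
  apply List.ext_getElem
  · simp [transposeD, h4]
  · intro n h1 h2
    have hnl : n < l.length := h2
    simp only [transposeD, List.getElem_map, List.getElem_range]
    have := (kcp_col_facts hp hpos n hnl).2.2
    rw [this, List.getD_eq_getElem l 0 hnl]


/-! ### The transpose of a diagram satisfying the invariants -/

lemma kcp_transpose {k : ℕ} {l : List ℕ} {D : List (ℕ × ℕ)}
    (hp : KCP k l D) (hl : IsKBoundedPartition k l) :
    KCP k (D.map Prod.snd) (transposeD D) := by
  obtain ⟨hsk, hhk, h3, h4, h5, h6, h7, h8⟩ := hp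
  have hp' : KCP k l D := ⟨hsk, hhk, h3, h4, h5, h6, h7, h8⟩
  obtain ⟨⟨hsort, hposl⟩, hbdd⟩ := hl
  by_cases hD : D = []
  · subst hD
    rw [show transposeD ([] : List (ℕ × ℕ)) = [] from by simp [transposeD, kcE, rowOf]]
    exact kcp_base k
  have hlne : l ≠ [] := by
    intro hc
    exact hD (List.length_eq_zero_iff.mp (h3.mpr hc))
  have hDpos : 0 < D.length := List.length_pos_iff.mpr hD
  set w := kcE D 0 with hwdef
  have hwl : w = l.length := h4
  have hwpos : 0 < w := by
    have := kcL_pos hsk hDpos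
    have he := kcE_def D 0
    omega
  have hTlen : (transposeD D).length = w := length_transposeD D
  have hcf : ∀ j, j < w → InDiag D (colBase D j) j ∧
      colTop D j = colBase D j + l.getD j 0 ∧ colLen D j = l.getD j 0 :=
    fun j hj => kcp_col_facts hp' hposl j (by omega)
  have hrowT : ∀ j, j < w → rowOf (transposeD D) j = (colBase D j, colLen D j) :=
    fun j hj => rowOf_transposeD D j hj
  have hST : ∀ j, j < w → kcS (transposeD D) j = colBase D j := by
    intro j hj
    rw [kcS, hrowT j hj]
  have hLT : ∀ j, j < w → kcL (transposeD D) j = colLen D j := by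
    intro j hj
    rw [kcL, hrowT j hj]
  have hET : ∀ j, j < w → kcE (transposeD D) j = colTop D j := by
    intro j hj
    rw [kcE, hrowT j hj]
    exact colBase_add_colLen hsk (hcf j hj).1
  have hbase_anti : ∀ j, j + 1 < w → colBase D (j+1) ≤ colBase D j := by
    intro j hj
    by_contra hc
    push_neg at hc
    have hb1 := (hcf (j+1) hj).1
    have hbj := (hcf j (by omega)).1
    have hE : kcE D (colBase D (j+1)) ≤ kcE D (colBase D j) := kcE_anti hsk (le_of_lt hc) hb1.1
    have h1 : j + 1 < kcE D (colBase D (j+1)) := hb1.2.2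
    have h2 : kcS D (colBase D j) ≤ j := hbj.2.1
    have hin : InDiag D (colBase D j) (j+1) := by
      rw [InDiag_iff]
      exact ⟨hbj.1, by omega, by omega⟩
    have h9 : colBase D (j+1) ≤ colBase D j :=
      Nat.sInf_le (show colBase D j ∈ {i | InDiag D i (j+1)} from hin)
    omega
  have htop_anti : ∀ j, j + 1 < w → colTop D (j+1) ≤ colTop D j := by
    intro j hj
    by_contra hc
    push_neg at hc
    have hb1 := (hcf (j+1) hj).1
    have hbj := (hcf j (by omega)).1
    have hbt1 := (InDiag_iff_col hsk _ (j+1)).mp hb1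
    have hbtj := (InDiag_iff_col hsk _ j).mp hbj
    have hy : InDiag D (colTop D (j+1) - 1) (j+1) := by
      rw [InDiag_iff_col hsk]
      omega
    by_cases hSy : kcS D (colTop D (j+1) - 1) ≤ j
    · have hin : InDiag D (colTop D (j+1) - 1) j := by
        rw [InDiag_iff]
        have hyr : j + 1 < kcE D (colTop D (j+1) - 1) := hy.2.2
        exact ⟨hy.1, hSy, by omega⟩
      have := ((InDiag_iff_col hsk _ j).mp hin).2
      omega
    · push_neg at hSy
      have hgt : colTop D (j+1) - 1 < colBase D j := by
        by_contra hc2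
        push_neg at hc2
        have := kcS_anti hsk hc2 hy.1
        have hbjS : kcS D (colBase D j) ≤ j := hbj.2.1
        omega
      omega
  have hskT : IsSkewRows (transposeD D) := by
    rw [isSkewRows_iff]
    constructor
    · intro j hj
      rw [hTlen] at hj
      rw [hLT j hj, (hcf j hj).2.2]
      have hjl : j < l.length := by omega
      rw [List.getD_eq_getElem l 0 hjl]
      exact hposl _ (List.getElem_mem hjl)
    · intro j hj
      rw [hTlen] at hj
      constructor
      · rw [hST j (by omega), hST (j+1) hj]
        exact hbase_anti j hj
      · rw [hET j (by omega), hET (j+1) hj]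
        exact htop_anti j hj
  have hhkT : HookBounded k (transposeD D) := by
    intro a b hab
    have haw : a < w := by
      have := hab.1
      rwa [hTlen] at this
    have hinD : InDiag D b a := (InDiag_transposeD hsk b a).mp hab
    have hbD : b < D.length := hinD.1
    have harm : armLen (transposeD D) a b = colTop D a - 1 - b := by
      rw [armLen_eq, hET a haw]
    have hleg : legLen (transposeD D) a b = kcE D b - (a + 1) := by
      rw [legLen_eq hskT hab, colTop_transposeD hsk hbD]
    have hhD := hhk b a hinD
    rw [hookLen_eq hsk hinD] at hhD
    have h1 : b < colTop D a := ((InDiag_iff_col hsk b a).mp hinD).2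
    have h2 : a < kcE D b := hinD.2.2
    rw [hookLen, harm, hleg]
    omega
  refine ⟨hskT, hhkT, ?_, ?_, ?_, ?_, ?_, ?_⟩
  · constructor
    · intro hc
      rw [hTlen] at hc
      omega
    · intro hc
      rw [List.map_eq_nil_iff] at hc
      exact absurd hc hD
  · rw [kcE, hrowT 0 hwpos, List.length_map]
    have := colBase_add_colLen hsk (hcf 0 hwpos).1
    have h2 := kcp_colTop_zero hp' hD
    simp only
    omega
  · intro hTne
    rw [hTlen, hST (w-1) (by omega)]
    have h0 : InDiag D 0 (w-1) := by
      rw [InDiag_iff]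
      have hL0 := kcL_pos hsk hDpos
      have he := kcE_def D 0
      refine ⟨hDpos, by omega, by omega⟩
    have h9 : colBase D (w-1) ≤ 0 :=
      Nat.sInf_le (show (0:ℕ) ∈ {i | InDiag D i (w-1)} from h0)
    omega
  · intro j hj i
    rw [List.length_map] at hj
    rw [colBase_transposeD hsk hj, getD_map_snd D j hj, InDiag_transposeD hsk j i,
      InDiag_iff]
    have he := kcE_def D j
    constructor
    · intro hx
      omega
    · intro hx
      refine ⟨hj, by omega, by omega⟩
  · intro a haT b hb
    rw [hTlen] at haT
    rw [hST a haT] at hb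
    have hin0 := (hcf a haT).1
    have hbD : b < D.length := by
      have := hin0.1
      omega
    have hba : a < kcS D b := by
      by_contra hc
      push_neg at hc
      by_cases ha2 : a < kcE D b
      · have hin : InDiag D b a := by
          rw [InDiag_iff]
          exact ⟨hbD, hc, ha2⟩
        have h9 : colBase D a ≤ b :=
          Nat.sInf_le (show b ∈ {i | InDiag D i a} from hin)
        omega
      · have hanti : kcE D (colBase D a) ≤ kcE D b := kcE_anti hsk (by omega) hin0.1
        have h99 : a < kcE D (colBase D a) := hin0.2.2
        omega
    have hcore := h7 b hbD a hba
    rw [hET a haT, colTop_transposeD hsk hbD]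
    omega
  · intro a ha
    rw [hTlen] at ha
    rw [hLT a (by omega), hLT (a+1) ha, (hcf a (by omega)).2.2, (hcf (a+1) ha).2.2]
    have ha1 : a + 1 < l.length := by omega
    rw [List.getD_eq_getElem l 0 (by omega : a < l.length), List.getD_eq_getElem l 0 ha1]
    have := List.pairwise_iff_get.mp hsort ⟨a, by omega⟩ ⟨a+1, by omega⟩ (by simp)
    simpa using this


/-! ### Uniqueness: any diagram satisfying the invariants is the k-skew diagram -/

lemma isKBounded_tail {k m : ℕ} {rest : List ℕ} (hl : IsKBoundedPartition k (m :: rest)) :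
    IsKBoundedPartition k rest := by
  obtain ⟨⟨hs, hpos⟩, hb⟩ := hl
  rw [List.pairwise_cons] at hs
  exact ⟨⟨hs.2, fun x hx => hpos x (by simp [hx])⟩, fun x hx => hb x (by simp [hx])⟩

lemma kcp_unique {k : ℕ} (l : List ℕ) (hl : IsKBoundedPartition k l)
    {D : List (ℕ × ℕ)} (hp : KCP k l D) : D = kSkewDiagram k l := by
  induction l generalizing D with
  | nil =>
    have h3 := hp.2.2.1
    have : D.length = 0 := h3.mpr rfl
    rw [List.length_eq_zero_iff] at this
    rw [this]
    rfl
  | cons m rest ih =>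
    obtain ⟨hsk, hhk, h3, h4, h5, h6, h7, h8⟩ := hp
    have hp' : KCP k (m :: rest) D := ⟨hsk, hhk, h3, h4, h5, h6, h7, h8⟩
    obtain ⟨⟨hsort, hposl⟩, hbdd⟩ := hl
    have hl' : IsKBoundedPartition k (m :: rest) := ⟨⟨hsort, hposl⟩, hbdd⟩
    have hm : 0 < m := hposl m (by simp)
    have hmk : m ≤ k := hbdd m (by simp)
    have hDne : D ≠ [] := by
      intro hc
      have := h3.mp (by rw [hc]; rfl)
      simp at this
    have hDpos : 0 < D.length := List.length_pos_iff.mpr hDne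
    have hllen : 0 < (m :: rest).length := by simp
    have hcf0 := kcp_col_facts hp' hposl 0 hllen
    have hwid : colTop D 0 = D.length := kcp_colTop_zero hp' hDne
    have hgd0 : (m :: rest).getD 0 0 = m := rfl
    set a := colBase D 0 with hadef
    have hlen_am : a + m = D.length := by
      have := hcf0.2.1
      rw [hgd0] at this
      omega
    have hIn0 : ∀ i, InDiag D i 0 ↔ a ≤ i ∧ i < D.length := by
      intro i
      rw [h6 0 hllen i, hgd0]
      constructor
      · intro hx
        omega
      · intro hx
        omega
    have hS0iff : ∀ i, i < D.length → (kcS D i = 0 ↔ a ≤ i) := by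
      intro i hi
      constructor
      · intro hS
        have hL := kcL_pos hsk hi
        have : InDiag D i 0 := by
          rw [InDiag_iff, kcE_def]
          omega
        exact ((hIn0 i).mp this).1
      · intro hai
        have := (hIn0 i).mpr ⟨hai, hi⟩
        have h9 : kcS D i ≤ 0 := this.2.1
        omega
    set len' := sInf {i | D.length ≤ i ∨ kcE D i ≤ 1} with hlen'def
    have hsetne : {i | D.length ≤ i ∨ kcE D i ≤ 1}.Nonempty := ⟨D.length, Or.inl le_rfl⟩
    have hlen'le : len' ≤ D.length := Nat.sInf_le (Or.inl le_rfl)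
    have hlt' : ∀ i, i < len' → i < D.length ∧ 2 ≤ kcE D i := by
      intro i hi
      have := Nat.notMem_of_lt_sInf (s := {i | D.length ≤ i ∨ kcE D i ≤ 1}) (by rw [← hlen'def]; exact hi)
      rw [Set.mem_setOf_eq] at this
      push_neg at this
      omega
    have hE1 : ∀ i, i < D.length → 1 ≤ kcE D i := by
      intro i hi
      have := kcL_pos hsk hi
      have he := kcE_def D i
      omega
    have hge' : ∀ i, len' ≤ i → i < D.length → kcE D i = 1 := by
      intro i hi1 hi2
      have hmem := Nat.sInf_mem hsetne
      rw [← hlen'def, Set.mem_setOf_eq] at hmem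
      rcases hmem with hc | hc
      · omega
      · have := kcE_anti hsk hi1 hi2
        have := hE1 i hi2
        omega
    have halen' : a ≤ len' := by
      by_contra hc
      push_neg at hc
      have h1 := hge' len' le_rfl (by omega)
      have h2 : ¬ (a ≤ len') := by omega
      have hL := kcL_pos hsk (show len' < D.length by omega)
      have he := kcE_def D len'
      have hS : kcS D len' = 0 := by omega
      exact h2 ((hS0iff len' (by omega)).mp hS)
    -- the reduced diagram
    set D' := (List.range len').map
      (fun i => if a ≤ i then ((0 : ℕ), kcL D i - 1) else (kcS D i - 1, kcL D i)) with hD'def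
    have hlenD' : D'.length = len' := by simp [hD'def]
    have hrowD' : ∀ i, i < len' →
        rowOf D' i = if a ≤ i then ((0:ℕ), kcL D i - 1) else (kcS D i - 1, kcL D i) := by
      intro i hi
      rw [rowOf, List.getD_eq_getElem _ _ (by rw [hlenD']; exact hi)]
      simp only [hD'def, List.getElem_map, List.getElem_range]
    have hS' : ∀ i, i < len' → kcS D' i = if a ≤ i then 0 else kcS D i - 1 := by
      intro i hi
      rw [kcS, hrowD' i hi]
      split_ifs <;> rfl
    have hL' : ∀ i, i < len' → kcL D' i = if a ≤ i then kcL D i - 1 else kcL D i := by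
      intro i hi
      rw [kcL, hrowD' i hi]
      split_ifs <;> rfl
    have hE' : ∀ i, i < len' → kcE D' i = kcE D i - 1 := by
      intro i hi
      have hil : i < D.length := by omega
      have he := kcE_def D i
      rw [kcE_def, hS' i hi, hL' i hi]
      by_cases hc : a ≤ i
      · have hS0 : kcS D i = 0 := (hS0iff i hil).mpr hc
        rw [if_pos hc, if_pos hc]
        omega
      · have hS0 : ¬ (kcS D i = 0) := fun hx => hc ((hS0iff i hil).mp hx)
        rw [if_neg hc, if_neg hc]
        omega
    have hIn' : ∀ i j, InDiag D' i j ↔ InDiag D i (j+1) := by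
      intro i j
      constructor
      · intro hin
        have hi' : i < len' := by
          have := hin.1
          omega
        have hil : i < D.length := by omega
        have hiS : kcS D' i ≤ j := hin.2.1
        have hiE : j < kcE D' i := hin.2.2
        rw [hS' i hi'] at hiS
        rw [hE' i hi'] at hiE
        rw [InDiag_iff]
        by_cases hc : a ≤ i
        · have hS0 : kcS D i = 0 := (hS0iff i hil).mpr hc
          exact ⟨hil, by omega, by omega⟩
        · rw [if_neg hc] at hiS
          have hS0 : ¬ (kcS D i = 0) := fun hx => hc ((hS0iff i hil).mp hx)
          exact ⟨hil, by omega, by omega⟩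
      · intro hin
        have hil : i < D.length := hin.1
        have hiS : kcS D i ≤ j + 1 := hin.2.1
        have hiE : j + 1 < kcE D i := hin.2.2
        have hi' : i < len' := by
          by_contra hc
          push_neg at hc
          have := hge' i hc hil
          omega
        rw [InDiag_iff, hlenD', hS' i hi', hE' i hi']
        by_cases hc : a ≤ i
        · have hS0 : kcS D i = 0 := (hS0iff i hil).mpr hc
          rw [if_pos hc]
          exact ⟨hi', by omega, by omega⟩
        · rw [if_neg hc]
          have hS0 : ¬ (kcS D i = 0) := fun hx => hc ((hS0iff i hil).mp hx)
          exact ⟨hi', by omega, by omega⟩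
    have hcolSet' : ∀ j, colSet D' j = colSet D (j+1) := by
      intro j
      ext x
      rw [mem_colSet_iff, mem_colSet_iff, hIn']
    have hcolBase' : ∀ j, colBase D' j = colBase D (j+1) := by
      intro j
      rw [colBase, colBase]
      congr 1
      exact Set.ext (fun i => by rw [Set.mem_setOf_eq, Set.mem_setOf_eq, hIn'])
    have hcolTop' : ∀ j, colTop D' j = colTop D (j+1) := by
      intro j
      rw [colTop, colTop, hcolSet']
    -- KCP for the reduced diagram
    have hskD' : IsSkewRows D' := by
      rw [isSkewRows_iff]
      constructor
      · intro i hi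
        rw [hlenD'] at hi
        rw [hL' i hi]
        have h1 := hlt' i hi
        have hL := kcL_pos hsk h1.1
        have he := kcE_def D i
        by_cases hc : a ≤ i
        · have hS0 : kcS D i = 0 := (hS0iff i h1.1).mpr hc
          rw [if_pos hc]
          omega
        · rw [if_neg hc]
          omega
      · intro i hi
        rw [hlenD'] at hi
        have h1 : i < len' := by omega
        have hadj := ((isSkewRows_iff D).mp hsk).2 i (by omega)
        constructor
        · rw [hS' i h1, hS' (i+1) hi]
          have hS0 : ¬ a ≤ i → ¬ (kcS D i = 0) := fun hc hx => hc ((hS0iff i (by omega)).mp hx)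
          split_ifs <;> omega
        · rw [hE' i h1, hE' (i+1) hi]
          omega
    have hhkD' : HookBounded k D' := by
      intro i j hin
      have hinD : InDiag D i (j+1) := (hIn' i j).mp hin
      have hi' : i < len' := by
        have := hin.1
        omega
      have harm : armLen D' i j = armLen D i (j+1) := by
        rw [armLen_eq, armLen_eq, hE' i hi']
        have := hinD.2.2
        omega
      have hleg : legLen D' i j = legLen D i (j+1) := by
        rw [legLen_eq_filter, legLen_eq_filter, hcolSet']
      rw [hookLen, harm, hleg]
      exact hhk i (j+1) hinD
    have hwD : kcE D 0 = rest.length + 1 := by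
      rw [h4]
      rfl
    have hp2 : KCP k rest D' := by
      refine ⟨hskD', hhkD', ?_, ?_, ?_, ?_, ?_, ?_⟩
      · -- length zero iff
        rw [hlenD']
        constructor
        · intro hc
          rcases rest with - | ⟨r, rs⟩
          · rfl
          · exfalso
            have : 2 ≤ kcE D 0 := by rw [hwD]; simp
            have h9 := hge' 0 (by omega) hDpos
            omega
        · intro hc
          subst hc
          have h9 : kcE D 0 ≤ 1 := by rw [hwD]; simp
          have : len' ≤ 0 := Nat.sInf_le (Or.inr h9)
          omega
      · -- width
        by_cases hc : len' = 0
        · have hD'nil : D' = [] := by rw [← List.length_eq_zero_iff, hlenD']; exact hc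
          have h9 : kcE D 0 ≤ 1 ∨ D.length ≤ 0 := by
            have hmem := Nat.sInf_mem hsetne
            rw [← hlen'def, hc, Set.mem_setOf_eq] at hmem
            tauto
          have hrnil : rest.length = 0 := by omega
          rw [hD'nil, hrnil]
          rfl
        · rw [hE' 0 (by omega), hwD]
          omega
      · -- top row of D' starts at 0
        intro hD'ne
        rw [hlenD']
        have hlen'pos : 0 < len' := by
          rw [← hlenD']
          exact List.length_pos_iff.mpr hD'ne
        by_cases hc : a ≤ len' - 1
        · rw [hS' (len'-1) (by omega), if_pos hc]
        · -- len' = a and a ≥ 1; use column 1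
          have hae : len' = a := by omega
          have hrne : 1 < (m :: rest).length := by
            have h9 := (hlt' 0 hlen'pos).2
            rw [hwD] at h9
            simp
            omega
          have hcf1 := kcp_col_facts hp' hposl 1 hrne
          have hb1in := hcf1.1
          have hb1S : kcS D (colBase D 1) ≤ 1 := hb1in.2.1
          have hb1E : 1 < kcE D (colBase D 1) := hb1in.2.2
          have hb1l : colBase D 1 < D.length := hb1in.1
          have hSa1 : kcS D (a-1) = 1 := by
            have hne0 : ¬ (kcS D (a-1) = 0) := by
              intro hx
              have := (hS0iff (a-1) (by omega)).mp hx
              omega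
            by_contra hc2
            have h2le : 2 ≤ kcS D (a-1) := by omega
            have hge : a ≤ colBase D 1 := by
              by_contra hc3
              push_neg at hc3
              have := kcS_anti hsk (show colBase D 1 ≤ a - 1 by omega) (show a - 1 < D.length by omega)
              omega
            have := hge' (colBase D 1) (by omega) hb1l
            omega
          rw [hS' (len'-1) (by omega), if_neg hc, hae]
          omega
      · -- columns of D'
        intro j hj i
        rw [hcolBase', hIn']
        have hj' : j + 1 < (m :: rest).length := by simp; omega
        rw [h6 (j+1) hj' i]
        rfl
      · -- core bound
        intro i hi j hj
        rw [hlenD'] at hi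
        rw [hS' i hi] at hj
        by_cases hc : a ≤ i
        · rw [if_pos hc] at hj
          omega
        · rw [if_neg hc] at hj
          have hil : i < D.length := by omega
          have hcore := h7 i hil (j+1) (by omega)
          rw [hE' i hi, hcolTop']
          have := hE1 i hil
          omega
      · -- row lengths weakly decreasing
        intro i hi
        rw [hlenD'] at hi
        have h1 : i < len' := by omega
        have hadj := h8 i (by omega)
        rw [hL' i h1, hL' (i+1) hi]
        split_ifs <;> omega
    have hrest : IsKBoundedPartition k rest := isKBounded_tail hl'
    have hIH : D' = kSkewDiagram k rest := ih hrest hp2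
    -- now identify D with addCol m a D'
    have hadd : addCol m a D' = D := by
      apply List.ext_getElem
      · rw [length_addCol, hlenD']
        omega
      · intro i hlt1 hlt2
        rw [length_addCol, hlenD'] at hlt1
        have hilen : i < D.length := hlt2
        rw [← rowOf_eq_getElem _ i hlt2,
          ← rowOf_eq_getElem _ i (by rw [length_addCol, hlenD']; omega)]
        rw [rowOf_addCol m a D' i (by rw [hlenD']; omega)]
        rw [hlenD']
        have hDi : rowOf D i = (kcS D i, kcL D i) := by
          rw [kcS, kcL]
        by_cases hc : a ≤ i
        · have hc2 : i < a + m := by omega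
          rw [if_pos ⟨hc, hc2⟩]
          have hS0 : kcS D i = 0 := (hS0iff i hilen).mpr hc
          by_cases hc3 : i < len'
          · rw [if_pos hc3, hrowD' i hc3, if_pos hc]
            simp only
            rw [hDi, hS0]
            have hL := kcL_pos hsk hilen
            have he := kcE_def D i
            have h2 := (hlt' i hc3).2
            congr 1
            omega
          · rw [if_neg hc3]
            have h9 := hge' i (by omega) hilen
            have he := kcE_def D i
            have hL := kcL_pos hsk hilen
            rw [hDi, hS0]
            congr 1
            omega
        · have hi' : i < len' := by omega
          rw [if_neg (by omega), hrowD' i hi', if_neg hc]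
          simp only
          have hS0 : ¬ (kcS D i = 0) := fun hx => hc ((hS0iff i hilen).mp hx)
          rw [hDi]
          congr 1
          omega
    have hCVa : ColValid k m a D' := by
      apply colValid_of hskD' hhkD' hm hmk (by omega) ?_ (by omega) ?_
      · intro i hi1 hi2
        rw [hlenD'] at hi2
        rw [hS' i hi2, if_pos hi1]
      · intro hlt
        rw [hlenD'] at hlt
        rw [hE' a hlt]
        have hain : InDiag D a 0 := (hIn0 a).mpr ⟨le_rfl, by omega⟩
        have hhka := hhk a 0 hain
        rw [hookLen_eq hsk hain, hwid] at hhka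
        have := hE1 a (by omega)
        omega
    have hmin : ∀ h', h' < a → ¬ ColValid k m h' D' := by
      intro h' hlt hCV
      obtain ⟨hp1, hp2', hp3⟩ := pieces_of_colValid hskD' hm hCV
      rw [hlenD'] at hp1 hp2' hp3
      have hlt2 : h' < len' := by omega
      have hcore := h7 (a-1) (by omega) 0 (by
        have : ¬ (kcS D (a-1) = 0) := fun hx => by
          have := (hS0iff (a-1) (by omega)).mp hx
          omega
        omega)
      rw [hwid] at hcore
      have hEanti : kcE D (a-1) ≤ kcE D h' := kcE_anti hsk (by omega) (by omega)
      have hhp3 := hp3 hlt2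
      rw [hE' h' hlt2] at hhp3
      have := (hlt' h' hlt2).2
      omega
    have hsInf : sInf {h' | ColValid k m h' D'} = a := by
      apply le_antisymm
      · exact Nat.sInf_le hCVa
      · by_contra hc
        push_neg at hc
        have hmem := Nat.sInf_mem (⟨a, hCVa⟩ : {h' | ColValid k m h' D'}.Nonempty)
        exact hmin _ hc hmem
    show D = kMul k m (kSkewDiagram k rest)
    rw [← hIH, kMul, hsInf, hadd]

end KCAux







/-- For every positive integer `k` and every `k`-bounded partition
`λ`, the `k`-conjugation is an involution: `(λ^{ω_k})^{ω_k} = λ`. -/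
theorem kConjugate_involutive (k : ℕ) (hk : 0 < k) (l : List ℕ)
    (hl : IsKBoundedPartition k l) :
    kConjugate k (kConjugate k l) = l := by
  have hP := kcp_kSkew k l hl
  have hkb := kcp_rows_kbounded hP hk
  have hPT := kcp_transpose hP hl
  have hU := kcp_unique _ hkb hPT
  have hfin := map_snd_transposeD hP hl.1.2
  show ((kSkewDiagram k ((kSkewDiagram k l).map Prod.snd)).map Prod.snd) = l
  rw [← hU]
  exact hfin
end

section
/- Let k be a positive integer, R = ℚ[h_1,…,h_k], and I_k the ideal of R generated by the k-rectangular Schur polynomials S_{(ℓ^{k+1−ℓ})} for ℓ = 1,…,k. Then the images in the quotient ring R/I_k of the products h_λ = h_{λ_1}⋯h_{λ_n}, as λ ranges over all k-irreducible partitions, form a basis of R/I_k as a ℚ-vector space. -/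
open MvPolynomial

/-- A `k`-bounded partition is `k`-irreducible if, for each `j = 1, …, k`, it has
at most `k - j` parts equal to `j` (in particular no part equal to `k`). -/
def IsKIrreducible (k : ℕ) (l : List ℕ) : Prop :=
  IsKBoundedPartition k l ∧ ∀ j, 1 ≤ j → j ≤ k → l.count j ≤ k - j

/-- The generator `h_m` of `R = ℚ[h_1, …, h_k]` (realized as the polynomial ring
in the `k` indeterminates `X 0 = h_1, …, X (k-1) = h_k`), with the conventions
`h_0 = 1` and `h_m = 0` for `m < 0` or `m > k`. -/
noncomputable def hElem (k : ℕ) (m : ℤ) : MvPolynomial (Fin k) ℚ :=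
  if hm : 1 ≤ m ∧ m ≤ (k : ℤ) then X ⟨m.toNat - 1, by omega⟩
  else if m = 0 then 1 else 0

/-- The `k`-rectangular Schur polynomial `S_{(ℓ^{k+1-ℓ})}`, given by the
Jacobi–Trudi determinant `det (h_{ℓ - i + j})_{1 ≤ i, j ≤ k+1-ℓ}`. -/
noncomputable def rectSchur (k ℓ : ℕ) : MvPolynomial (Fin k) ℚ :=
  (Matrix.of fun i j : Fin (k + 1 - ℓ) =>
    hElem k ((ℓ : ℤ) - (((i : ℕ) : ℤ) + 1) + (((j : ℕ) : ℤ) + 1))).det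

/-- The ideal `I_k` of `R = ℚ[h_1, …, h_k]` generated by the `k`-rectangular
Schur polynomials `S_{(ℓ^{k+1-ℓ})}`, `ℓ = 1, …, k`. -/
noncomputable def rectIdeal (k : ℕ) : Ideal (MvPolynomial (Fin k) ℚ) :=
  Ideal.span (rectSchur k '' Set.Icc 1 k)

/-- For a `k`-bounded partition `λ = (λ_1, …, λ_n)`, the product
`h_λ = h_{λ_1} ⋯ h_{λ_n}`. -/
noncomputable def hProd (k : ℕ) (l : List ℕ) : MvPolynomial (Fin k) ℚ :=
  (l.map fun m => hElem k (m : ℤ)).prod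

namespace KRect

variable (k : ℕ)

/-- product of h's over a multiset of parts -/
noncomputable def hM (s : Multiset ℕ) : MvPolynomial (Fin k) ℚ :=
  (s.map fun m => hElem k (m : ℤ)).prod

def Bdd (s : Multiset ℕ) : Prop := ∀ x ∈ s, 1 ≤ x ∧ x ≤ k

def sz (s : Multiset ℕ) : ℕ := s.sum
def wt (s : Multiset ℕ) : ℕ := (s.map fun x => x * x).sum

/-- exponent vector of a multiset of parts -/
noncomputable def cnt (s : Multiset ℕ) : Fin k →₀ ℕ :=
  Finsupp.equivFunOnFinite.symm (fun i => s.count ((i : ℕ) + 1))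

@[simp] lemma cnt_apply (s : Multiset ℕ) (i : Fin k) :
    cnt k s i = s.count ((i : ℕ) + 1) := rfl

@[simp] lemma hM_zero : hM k 0 = 1 := by simp [hM]

lemma hM_cons (a : ℕ) (s : Multiset ℕ) :
    hM k (a ::ₘ s) = hElem k (a : ℤ) * hM k s := by simp [hM]

lemma hM_add (s t : Multiset ℕ) : hM k (s + t) = hM k s * hM k t := by
  simp [hM]

lemma hElem_of_bdd (a : ℕ) (h1 : 1 ≤ a) (h2 : a ≤ k) :
    hElem k (a : ℤ) = X ⟨a - 1, by omega⟩ := by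
  rw [hElem, dif_pos (by constructor <;> omega)]
  congr 1

lemma cnt_cons (a : ℕ) (h1 : 1 ≤ a) (h2 : a ≤ k) (s : Multiset ℕ) :
    cnt k (a ::ₘ s) = Finsupp.single ⟨a - 1, by omega⟩ 1 + cnt k s := by
  ext i
  rcases eq_or_ne (i : ℕ) (a - 1) with h | h
  · have : (i:ℕ) + 1 = a := by omega
    have hi : i = (⟨a - 1, by omega⟩ : Fin k) := by ext; simpa using h
    have hc : a - 1 + 1 = a := by omega
    simp [hi, this, hc, Multiset.count_cons_self, add_comm]
  · have : (i:ℕ) + 1 ≠ a := by omega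
    have hi : i ≠ (⟨a - 1, by omega⟩ : Fin k) := by
      intro hh; apply h; rw [hh]
    rw [Finsupp.add_apply, cnt_apply, cnt_apply, Multiset.count_cons_of_ne this,
      Finsupp.single_eq_of_ne' (fun hh => hi hh.symm), zero_add]

lemma hM_eq_monomial (s : Multiset ℕ) (hs : Bdd k s) :
    hM k s = monomial (cnt k s) 1 := by
  induction s using Multiset.induction with
  | empty =>
    have : cnt k 0 = 0 := by ext i; simp
    simp [hM, this]
  | cons a s ih =>
    have ha := hs a (Multiset.mem_cons_self a s)
    have hbs : Bdd k s := fun x hx => hs x (Multiset.mem_cons_of_mem hx)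
    rw [hM_cons, ih hbs, hElem_of_bdd k a ha.1 ha.2, cnt_cons k a ha.1 ha.2,
      X, monomial_mul, one_mul]

lemma cnt_inj {s t : Multiset ℕ} (hs : Bdd k s) (ht : Bdd k t)
    (h : cnt k s = cnt k t) : s = t := by
  ext x
  rcases le_or_gt x 0 with hx0 | hx0
  · have h1 : x ∉ s := fun hh => by have := hs _ hh; omega
    have h2 : x ∉ t := fun hh => by have := ht _ hh; omega
    simp [Multiset.count_eq_zero.2 h1, Multiset.count_eq_zero.2 h2]
  · rcases le_or_gt x k with hxk | hxk
    · have := DFunLike.congr_fun h (⟨x - 1, by omega⟩ : Fin k)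
      simpa [show x - 1 + 1 = x by omega] using this
    · have h1 : x ∉ s := fun hh => by have := hs _ hh; omega
      have h2 : x ∉ t := fun hh => by have := ht _ hh; omega
      simp [Multiset.count_eq_zero.2 h1, Multiset.count_eq_zero.2 h2]


@[simp] lemma sz_add (s t : Multiset ℕ) : sz (s + t) = sz s + sz t := by
  simp [sz]

@[simp] lemma wt_add (s t : Multiset ℕ) : wt (s + t) = wt s + wt t := by
  simp [wt]

lemma Bdd.add {s t : Multiset ℕ} (hs : Bdd k s) (ht : Bdd k t) : Bdd k (s + t) := by
  intro x hx
  rcases Multiset.mem_add.1 hx with h | h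
  · exact hs x h
  · exact ht x h

lemma Bdd.zero : Bdd k 0 := by intro x hx; simp at hx

lemma wt_le_k_mul_sz {s : Multiset ℕ} (hs : Bdd k s) : wt s ≤ k * sz s := by
  induction s using Multiset.induction with
  | empty => simp [wt, sz]
  | cons a s ih =>
    have ha := hs a (Multiset.mem_cons_self a s)
    have hbs : Bdd k s := fun x hx => hs x (Multiset.mem_cons_of_mem hx)
    have : wt (a ::ₘ s) = a * a + wt s := by simp [wt]
    have h2 : sz (a ::ₘ s) = a + sz s := by simp [sz]
    rw [this, h2, Nat.mul_add]
    exact Nat.add_le_add (Nat.mul_le_mul_right a ha.2) (ih hbs)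

/-- span of `hM t` over bounded `t` of fixed size with weight `> w` -/
noncomputable def V (n w : ℕ) : Submodule ℚ (MvPolynomial (Fin k) ℚ) :=
  Submodule.span ℚ {p | ∃ t : Multiset ℕ, Bdd k t ∧ sz t = n ∧ w < wt t ∧ p = hM k t}

/-- triangularity predicate: `x` equals `hM t` plus higher-weight terms -/
def Tri (x : MvPolynomial (Fin k) ℚ) (t : Multiset ℕ) : Prop :=
  x - hM k t ∈ V k (sz t) (wt t)

lemma Tri.self (t : Multiset ℕ) : Tri k (hM k t) t := by
  simp [Tri, Submodule.zero_mem]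

lemma mul_mem_span_aux {S T : Set (MvPolynomial (Fin k) ℚ)}
    {U : Submodule ℚ (MvPolynomial (Fin k) ℚ)}
    (h : ∀ x ∈ S, ∀ y ∈ T, x * y ∈ U) :
    ∀ p ∈ Submodule.span ℚ S, ∀ q ∈ Submodule.span ℚ T, p * q ∈ U := by
  intro p hp
  induction hp using Submodule.span_induction with
  | mem x hx =>
    intro q hq
    induction hq using Submodule.span_induction with
    | mem y hy => exact h x hx y hy
    | zero => simpa using U.zero_mem
    | add y z _ _ hy hz => rw [mul_add]; exact U.add_mem hy hz
    | smul c y _ hy => rw [mul_smul_comm]; exact U.smul_mem c hy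
  | zero => intro q hq; simpa using U.zero_mem
  | add p1 p2 _ _ h1 h2 => intro q hq; rw [add_mul]; exact U.add_mem (h1 q hq) (h2 q hq)
  | smul c p1 _ h1 => intro q hq; rw [smul_mul_assoc]; exact U.smul_mem c (h1 q hq)

lemma V_mul_V {n1 w1 n2 w2 : ℕ} {p q : MvPolynomial (Fin k) ℚ}
    (hp : p ∈ V k n1 w1) (hq : q ∈ V k n2 w2) : p * q ∈ V k (n1 + n2) (w1 + w2) := by
  refine mul_mem_span_aux k ?_ p hp q hq
  rintro x ⟨t, ht, hszt, hwtt, rfl⟩ y ⟨u, hu, hszu, hwtu, rfl⟩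
  rw [← hM_add]
  exact Submodule.subset_span ⟨t + u, ht.add k hu, by simp [hszt, hszu],
    by simp; omega, rfl⟩

lemma hM_mul_V {n w : ℕ} {q : MvPolynomial (Fin k) ℚ} (t : Multiset ℕ) (ht : Bdd k t)
    (hq : q ∈ V k n w) : hM k t * q ∈ V k (sz t + n) (wt t + w) := by
  have : hM k t ∈ V k (sz t) (wt t - 1) ∨ True := Or.inr trivial
  -- direct: use span induction via mul_mem_span_aux with S = {hM t}
  refine mul_mem_span_aux k (S := {hM k t}) ?_ (hM k t) (Submodule.subset_span rfl) q hq
  rintro x rfl y ⟨u, hu, hszu, hwtu, rfl⟩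
  rw [← hM_add]
  exact Submodule.subset_span ⟨t + u, ht.add k hu, by simp [hszu],
    by simp; omega, rfl⟩

lemma Tri.mul {x y : MvPolynomial (Fin k) ℚ} {a b : Multiset ℕ}
    (ha : Bdd k a) (hb : Bdd k b) (hx : Tri k x a) (hy : Tri k y b) :
    Tri k (x * y) (a + b) := by
  unfold Tri at *
  have key : x * y - hM k (a + b) =
      (x - hM k a) * (y - hM k b) + (x - hM k a) * hM k b + hM k a * (y - hM k b) := by
    rw [hM_add]; ring
  rw [key, sz_add, wt_add]
  refine Submodule.add_mem _ (Submodule.add_mem _ ?_ ?_) ?_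
  · exact V_mul_V k hx hy
  · -- (x - hM a) * hM b ∈ V
    have := hM_mul_V k (n := sz a) (w := wt a) b hb (by
      -- need commutativity: hM b * (x - hM a)
      exact hx)
    rw [mul_comm] at this
    convert this using 2 <;> omega
  · exact hM_mul_V k a ha hy


def rectM (ℓ : ℕ) : Multiset ℕ := Multiset.replicate (k + 1 - ℓ) ℓ

lemma rectM_bdd {ℓ : ℕ} (h1 : 1 ≤ ℓ) (h2 : ℓ ≤ k) : Bdd k (rectM k ℓ) := by
  intro x hx
  rw [Multiset.eq_of_mem_replicate (show x ∈ Multiset.replicate (k+1-ℓ) ℓ from hx)]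
  exact ⟨h1, h2⟩

@[simp] lemma sz_rectM (ℓ : ℕ) : sz (rectM k ℓ) = (k + 1 - ℓ) * ℓ := by
  simp [sz, rectM, Multiset.sum_replicate]

@[simp] lemma wt_rectM (ℓ : ℕ) : wt (rectM k ℓ) = (k + 1 - ℓ) * (ℓ * ℓ) := by
  simp [wt, rectM, Multiset.map_replicate, Multiset.sum_replicate]

lemma hM_rectM (ℓ : ℕ) : hM k (rectM k ℓ) = hElem k (ℓ : ℤ) ^ (k + 1 - ℓ) := by
  simp [hM, rectM, Multiset.map_replicate, Multiset.prod_replicate]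

lemma hElem_neg {m : ℤ} (hm : m < 0) : hElem k m = 0 := by
  rw [hElem, dif_neg (by omega), if_neg (by omega)]

lemma hElem_toNat {m : ℤ} (hm : 0 ≤ m) : hElem k m = hElem k ((m.toNat : ℕ) : ℤ) := by
  rw [Int.toNat_of_nonneg hm]

lemma sum_filter_ne_zero (m : Multiset ℕ) : (m.filter (· ≠ 0)).sum = m.sum := by
  conv_rhs => rw [← Multiset.filter_add_not (· ≠ 0) m]
  rw [Multiset.sum_add]
  have : (m.filter (fun x => ¬ x ≠ 0)).sum = 0 := by
    apply Multiset.sum_eq_zero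
    intro x hx
    have := Multiset.of_mem_filter hx
    simpa using this
  omega

lemma sq_filter_ne_zero (m : Multiset ℕ) :
    ((m.filter (· ≠ 0)).map (fun x => x * x)).sum = (m.map fun x => x * x).sum := by
  conv_rhs => rw [← Multiset.filter_add_not (· ≠ 0) m]
  rw [Multiset.map_add, Multiset.sum_add]
  have : ((m.filter (fun x => ¬ x ≠ 0)).map (fun x => x * x)).sum = 0 := by
    apply Multiset.sum_eq_zero
    intro x hx
    rcases Multiset.mem_map.1 hx with ⟨y, hy, rfl⟩
    have := Multiset.of_mem_filter hy
    simp at this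
    simp [this]
  omega

lemma prod_hM_filter (m : Multiset ℕ) :
    hM k (m.filter (· ≠ 0)) = hM k m := by
  induction m using Multiset.induction with
  | empty => simp
  | cons a m ih =>
    by_cases ha : a = 0
    · subst ha
      rw [Multiset.filter_cons_of_neg _ (by simp), hM_cons, ih]
      have : hElem k ((0:ℕ):ℤ) = 1 := by simp [hElem]
      rw [this, one_mul]
    · rw [Multiset.filter_cons_of_pos _ (by simpa using ha), hM_cons, hM_cons, ih]

lemma hM_multiset_map {α : Type*} (t : Multiset α) (g : α → ℕ) :
    hM k (t.map g) = (t.map fun i => hElem k ((g i : ℕ) : ℤ)).prod := by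
  induction t using Multiset.induction with
  | empty => simp
  | cons a t ih => rw [Multiset.map_cons, hM_cons, Multiset.map_cons, Multiset.prod_cons, ih]

lemma tri_rectSchur {ℓ : ℕ} (h1 : 1 ≤ ℓ) (h2 : ℓ ≤ k) :
    Tri k (rectSchur k ℓ) (rectM k ℓ) := by
  classical
  set N := k + 1 - ℓ with hN
  set a : Equiv.Perm (Fin N) → Fin N → ℤ :=
    fun σ i => (ℓ : ℤ) + ((i : ℕ) : ℤ) - ((σ i : ℕ) : ℤ) with ha
  have hdet : rectSchur k ℓ = ∑ σ : Equiv.Perm (Fin N),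
      Equiv.Perm.sign σ • ∏ i : Fin N, hElem k (a σ i) := by
    rw [rectSchur, Matrix.det_apply]
    apply Finset.sum_congr rfl
    intro σ _
    congr 1
    apply Finset.prod_congr rfl
    intro i _
    rw [Matrix.of_apply]
    congr 1
    simp only [ha]
    ring
  have hid : (∏ i : Fin N, hElem k (a 1 i)) = hM k (rectM k ℓ) := by
    rw [hM_rectM]
    have : ∀ i : Fin N, a 1 i = (ℓ : ℤ) := by
      intro i; simp [ha]
    calc (∏ i : Fin N, hElem k (a 1 i)) = ∏ _i : Fin N, hElem k (ℓ : ℤ) :=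
          Finset.prod_congr rfl fun i _ => by rw [this i]
      _ = hElem k (ℓ : ℤ) ^ N := by
          rw [Finset.prod_const, Finset.card_univ, Fintype.card_fin]
  rw [Tri, hdet, ← Finset.add_sum_erase _ _ (Finset.mem_univ (1 : Equiv.Perm (Fin N)))]
  rw [map_one, one_smul, hid, add_sub_cancel_left]
  apply Submodule.sum_mem
  intro σ hσ
  have hσ1 : σ ≠ 1 := (Finset.mem_erase.1 hσ).1
  have key : (∏ i : Fin N, hElem k (a σ i)) ∈ V k (sz (rectM k ℓ)) (wt (rectM k ℓ)) := by
    by_cases hneg : ∃ i, a σ i < 0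
    · rcases hneg with ⟨i, hi⟩
      rw [Finset.prod_eq_zero (Finset.mem_univ i) (hElem_neg k hi)]
      exact Submodule.zero_mem _
    · push_neg at hneg
      have hub : ∀ i, a σ i ≤ (k : ℤ) := by
        intro i
        have hi1 : (i : ℕ) < N := i.isLt
        have hi2 : (0 : ℤ) ≤ ((σ i : ℕ) : ℤ) := by positivity
        have hi3 : ((i : ℕ) : ℤ) ≤ (N : ℤ) - 1 := by omega
        simp only [ha]
        omega
      set m : Multiset ℕ := Finset.univ.val.map (fun i : Fin N => (a σ i).toNat) with hm
      set s : Multiset ℕ := m.filter (· ≠ 0) with hs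
      have hcast : ∀ i : Fin N, (((a σ i).toNat : ℕ) : ℤ) = a σ i :=
        fun i => Int.toNat_of_nonneg (hneg i)
      have hprod : (∏ i : Fin N, hElem k (a σ i)) = hM k s := by
        rw [hs, prod_hM_filter, hm, hM_multiset_map]
        rw [Finset.prod_eq_multiset_prod]
        congr 1
        apply Multiset.map_congr rfl
        intro i _
        rw [hcast i]
      have hbdd : Bdd k s := by
        intro x hx
        rw [hs, Multiset.mem_filter] at hx
        obtain ⟨hx2, hx1⟩ := hx
        rw [hm] at hx2
        rcases Multiset.mem_map.1 hx2 with ⟨i, _, rfl⟩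
        have := hub i
        have := hneg i
        omega
      -- sums over ℤ
      have hb0 : (∑ i : Fin N, (((σ i : ℕ) : ℤ))) = ∑ i : Fin N, ((i : ℕ) : ℤ) :=
        Equiv.sum_comp σ (fun j : Fin N => ((j : ℕ) : ℤ))
      have hsz : sz s = sz (rectM k ℓ) := by
        have h1' : sz s = m.sum := by rw [hs]; exact sum_filter_ne_zero m
        have h2' : (m.sum : ℤ) = ∑ i : Fin N, a σ i := by
          rw [hm]
          rw [show (Finset.univ.val.map (fun i : Fin N => (a σ i).toNat)).sum
            = ∑ i : Fin N, (a σ i).toNat from rfl]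
          push_cast
          exact Finset.sum_congr rfl fun i _ => hcast i
        have h3' : (∑ i : Fin N, a σ i) = (N : ℤ) * (ℓ : ℤ) := by
          have : ∀ i : Fin N, a σ i = ((ℓ : ℤ) + ((i:ℕ):ℤ)) - ((σ i : ℕ) : ℤ) := by
            intro i; simp [ha]
          rw [Finset.sum_congr rfl fun i _ => this i, Finset.sum_sub_distrib, hb0,
            Finset.sum_add_distrib]
          simp [Finset.card_univ, mul_comm]
        have : (sz s : ℤ) = (N:ℤ) * (ℓ:ℤ) := by rw [h1', h2', h3']
        have hrect : sz (rectM k ℓ) = N * ℓ := by rw [sz_rectM]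
        rw [hrect]
        exact_mod_cast this
      have hwt : wt (rectM k ℓ) < wt s := by
        have h1' : wt s = (m.map fun x => x * x).sum := by rw [hs, wt]; exact sq_filter_ne_zero m
        have e1 : (m.map fun x => x * x).sum = ∑ i : Fin N, ((a σ i).toNat * (a σ i).toNat) := by
          rw [hm, Multiset.map_map]; rfl
        have h2' : ((((m.map fun x => x * x).sum) : ℕ) : ℤ) = ∑ i : Fin N, a σ i * a σ i := by
          rw [e1]
          push_cast
          exact Finset.sum_congr rfl fun i _ => by rw [hcast i]
        set b : Fin N → ℤ := fun i => ((i:ℕ):ℤ) - ((σ i : ℕ):ℤ) with hbdef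
        have hbsum : (∑ i : Fin N, b i) = 0 := by
          rw [hbdef, Finset.sum_sub_distrib, hb0, sub_self]
        have h3' : (∑ i : Fin N, (a σ i) * (a σ i))
            = (N:ℤ) * ((ℓ:ℤ) * (ℓ:ℤ)) + ∑ i : Fin N, b i * b i := by
          have expand : ∀ i : Fin N, (a σ i) * (a σ i)
              = (ℓ:ℤ) * (ℓ:ℤ) + 2 * (ℓ:ℤ) * b i + b i * b i := by
            intro i
            have : a σ i = (ℓ:ℤ) + b i := by simp only [ha, hbdef]; ring
            rw [this]; ring
          rw [Finset.sum_congr rfl fun i _ => expand i, Finset.sum_add_distrib,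
            Finset.sum_add_distrib]
          have e2 : (∑ _i : Fin N, (ℓ:ℤ) * (ℓ:ℤ)) = (N:ℤ) * ((ℓ:ℤ) * (ℓ:ℤ)) := by
            rw [Finset.sum_const, Finset.card_univ, Fintype.card_fin, nsmul_eq_mul]
          have e3 : (∑ i : Fin N, 2 * (ℓ:ℤ) * b i) = 0 := by
            rw [← Finset.mul_sum, hbsum, mul_zero]
          rw [e2, e3, add_zero]
        have hpos : 1 ≤ ∑ i : Fin N, b i * b i := by
          have hex : ∃ i, σ i ≠ i := by
            by_contra hcon
            push_neg at hcon
            exact hσ1 (Equiv.ext fun i => hcon i)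
          rcases hex with ⟨i0, hi0⟩
          have hbne : b i0 ≠ 0 := by
            simp only [hbdef]
            intro hcon
            apply hi0
            apply Fin.ext
            omega
          have h1le : 1 ≤ b i0 * b i0 := by
            rcases lt_or_gt_of_ne hbne with h | h
            · nlinarith
            · nlinarith
          calc (1:ℤ) ≤ b i0 * b i0 := h1le
            _ ≤ ∑ i : Fin N, b i * b i := by
                apply Finset.single_le_sum (f := fun i => b i * b i) ?_ (Finset.mem_univ i0)
                intro i _
                exact mul_self_nonneg _
        have hrw : wt (rectM k ℓ) = N * (ℓ * ℓ) := by rw [wt_rectM]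
        have hcastN : ((N * (ℓ * ℓ) : ℕ) : ℤ) = (N:ℤ) * ((ℓ:ℤ) * (ℓ:ℤ)) := by push_cast; ring
        have hfin : ((wt (rectM k ℓ) : ℕ) : ℤ) < ((wt s : ℕ) : ℤ) := by
          rw [hrw, hcastN, h1', h2', h3']
          linarith
        exact_mod_cast hfin
      rw [hprod]
      exact Submodule.subset_span ⟨s, hbdd, hsz, hwt, rfl⟩
  rcases Int.units_eq_one_or (Equiv.Perm.sign σ) with h | h
  · rw [h, one_smul]; exact key
  · rw [h]
    have : (-1 : ℤˣ) • (∏ i : Fin N, hElem k (a σ i)) = -(∏ i : Fin N, hElem k (a σ i)) := by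
      simp
    rw [this]
    exact Submodule.neg_mem _ key


def IrrM (s : Multiset ℕ) : Prop :=
  Bdd k s ∧ ∀ j, 1 ≤ j → j ≤ k → s.count j ≤ k - j

lemma Bdd.nsmul {s : Multiset ℕ} (hs : Bdd k s) (n : ℕ) : Bdd k (n • s) := by
  induction n with
  | zero => simpa using Bdd.zero k
  | succ n ih => rw [succ_nsmul]; exact ih.add k hs

/-- the multiset of rectangles encoded by `d` -/
def buildR (d : Fin k →₀ ℕ) : Multiset ℕ :=
  ∑ i : Fin k, d i • rectM k ((i : ℕ) + 1)

/-- combine an irreducible part and rectangles -/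
def buildM (d : Fin k →₀ ℕ) (s : Multiset ℕ) : Multiset ℕ := s + buildR k d

lemma buildR_bdd (d : Fin k →₀ ℕ) : Bdd k (buildR k d) := by
  rw [buildR]
  classical
  induction (Finset.univ : Finset (Fin k)) using Finset.induction with
  | empty => simpa using Bdd.zero k
  | @insert a t hnot ih =>
    rw [Finset.sum_insert hnot]
    have := a.isLt
    exact Bdd.add k (Bdd.nsmul k (rectM_bdd k (by omega) (by omega)) _) ih

lemma count_buildR (d : Fin k →₀ ℕ) {j : ℕ} (h1 : 1 ≤ j) (h2 : j ≤ k) :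
    (buildR k d).count j = d ⟨j - 1, by omega⟩ * (k + 1 - j) := by
  classical
  rw [buildR, Multiset.count_sum']
  rw [Finset.sum_eq_single (⟨j - 1, by omega⟩ : Fin k)]
  · rw [Multiset.count_nsmul, rectM, Multiset.count_replicate,
      if_pos (show _ + 1 = j by show j - 1 + 1 = j; omega)]
    congr 1
    show k + 1 - (j - 1 + 1) = k + 1 - j
    omega
  · intro i _ hi
    rw [Multiset.count_nsmul, rectM, Multiset.count_replicate,
      if_neg (by intro hh; apply hi; apply Fin.ext; show (i : ℕ) = j - 1; omega), mul_zero]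
  · intro h; exact absurd (Finset.mem_univ _) h

lemma count_buildR_zero (d : Fin k →₀ ℕ) {j : ℕ} (h : j = 0 ∨ k < j) :
    (buildR k d).count j = 0 := by
  rw [Multiset.count_eq_zero]
  intro hc
  have := buildR_bdd k d j hc
  omega

lemma count_buildM (d : Fin k →₀ ℕ) (s : Multiset ℕ) {j : ℕ} (h1 : 1 ≤ j) (h2 : j ≤ k) :
    (buildM k d s).count j = s.count j + d ⟨j - 1, by omega⟩ * (k + 1 - j) := by
  rw [buildM, Multiset.count_add, count_buildR k d h1 h2]

lemma buildM_inj {d d' : Fin k →₀ ℕ} {s s' : Multiset ℕ}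
    (hs : IrrM k s) (hs' : IrrM k s')
    (h : buildM k d s = buildM k d' s') : d = d' ∧ s = s' := by
  have key : ∀ j (_ : 1 ≤ j) (_ : j ≤ k),
      s.count j = s'.count j ∧ d ⟨j - 1, by omega⟩ = d' ⟨j - 1, by omega⟩ := by
    intro j hj1 hj2
    have e1 := count_buildM k d s hj1 hj2
    have e2 := count_buildM k d' s' hj1 hj2
    rw [h, e2] at e1
    have hlt : s.count j < k + 1 - j := by
      have := hs.2 j hj1 hj2; omega
    have hlt' : s'.count j < k + 1 - j := by
      have := hs'.2 j hj1 hj2; omega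
    set M := k + 1 - j with hM
    have hM0 : M ≠ 0 := by omega
    have hmod : s'.count j = s.count j := by
      have := congrArg (· % M) e1
      simpa [Nat.add_mul_mod_self_right, Nat.mod_eq_of_lt hlt, Nat.mod_eq_of_lt hlt'] using this
    constructor
    · omega
    · have : d' ⟨j - 1, by omega⟩ * M = d ⟨j - 1, by omega⟩ * M := by omega
      exact (Nat.eq_of_mul_eq_mul_right (by omega) this).symm
  constructor
  · ext i
    have := (key ((i : ℕ) + 1) (by omega) (by omega)).2
    have hi : (⟨(i : ℕ) + 1 - 1, by omega⟩ : Fin k) = i := by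
      apply Fin.ext; simp
    rwa [hi] at this
  · ext j
    rcases le_or_gt j 0 with hj | hj
    · have h1 : j ∉ s := fun hh => by have := hs.1 _ hh; omega
      have h2 : j ∉ s' := fun hh => by have := hs'.1 _ hh; omega
      simp [Multiset.count_eq_zero.2 h1, Multiset.count_eq_zero.2 h2]
    · rcases le_or_gt j k with hjk | hjk
      · exact (key j hj hjk).1
      · have h1 : j ∉ s := fun hh => by have := hs.1 _ hh; omega
        have h2 : j ∉ s' := fun hh => by have := hs'.1 _ hh; omega
        simp [Multiset.count_eq_zero.2 h1, Multiset.count_eq_zero.2 h2]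

lemma buildM_surj {t : Multiset ℕ} (ht : Bdd k t) :
    ∃ (d : Fin k →₀ ℕ) (s : Multiset ℕ), IrrM k s ∧ buildM k d s = t := by
  classical
  refine ⟨Finsupp.equivFunOnFinite.symm (fun i => t.count ((i : ℕ) + 1) / (k - (i : ℕ))),
    ∑ i : Fin k, Multiset.replicate (t.count ((i : ℕ) + 1) % (k - (i : ℕ))) ((i : ℕ) + 1),
    ?_, ?_⟩
  · constructor
    · intro x hx
      rw [Multiset.mem_sum] at hx
      rcases hx with ⟨i, _, hx⟩
      have := Multiset.eq_of_mem_replicate hx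
      subst this
      have := i.isLt
      omega
    · intro j hj1 hj2
      rw [Multiset.count_sum']
      rw [Finset.sum_eq_single (⟨j - 1, by omega⟩ : Fin k)]
      · rw [Multiset.count_replicate, if_pos (show _ + 1 = j by show j - 1 + 1 = j; omega)]
        have : (⟨j - 1, by omega⟩ : Fin k).val = j - 1 := rfl
        rw [this]
        have hkj : k - (j - 1) = k + 1 - j := by omega
        rw [hkj]
        have := Nat.mod_lt (t.count (j - 1 + 1)) (show 0 < k + 1 - j by omega)
        omega
      · intro i _ hi
        rw [Multiset.count_replicate,
          if_neg (by intro hh; apply hi; apply Fin.ext; show (i : ℕ) = j - 1; omega)]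
      · intro h; exact absurd (Finset.mem_univ _) h
  · ext j
    rcases le_or_gt j 0 with hj | hj
    · have h2 : j ∉ t := fun hh => by have := ht _ hh; omega
      rw [Multiset.count_eq_zero.2 h2, Multiset.count_eq_zero]
      intro hc
      rcases Multiset.mem_add.1 hc with hc | hc
      · rw [Multiset.mem_sum] at hc
        rcases hc with ⟨i, _, hc⟩
        have := Multiset.eq_of_mem_replicate hc
        omega
      · have := buildR_bdd k _ _ hc
        omega
    · rcases le_or_gt j k with hjk | hjk
      · rw [count_buildM k _ _ hj hjk]
        rw [Multiset.count_sum']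
        rw [Finset.sum_eq_single (⟨j - 1, by omega⟩ : Fin k)]
        · rw [Multiset.count_replicate, if_pos (show _ + 1 = j by show j - 1 + 1 = j; omega)]
          have hv : (⟨j - 1, by omega⟩ : Fin k).val = j - 1 := rfl
          rw [hv]
          rw [show Finsupp.equivFunOnFinite.symm (fun i : Fin k => t.count ((i : ℕ) + 1) / (k - (i : ℕ)))
            ⟨j - 1, by omega⟩ = t.count ((j-1) + 1) / (k - (j-1)) from rfl]
          have hj1 : j - 1 + 1 = j := by omega
          have hkj : k - (j - 1) = k + 1 - j := by omega
          rw [hj1, hkj]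
          exact Nat.mod_add_div' _ _
        · intro i _ hi
          rw [Multiset.count_replicate,
            if_neg (by intro hh; apply hi; apply Fin.ext; show (i : ℕ) = j - 1; omega)]
        · intro h; exact absurd (Finset.mem_univ _) h
      · have h2 : j ∉ t := fun hh => by have := ht _ hh; omega
        rw [Multiset.count_eq_zero.2 h2, Multiset.count_eq_zero]
        intro hc
        rcases Multiset.mem_add.1 hc with hc | hc
        · rw [Multiset.mem_sum] at hc
          rcases hc with ⟨i, _, hc⟩
          have := Multiset.eq_of_mem_replicate hc
          have := i.isLt
          omega
        · have := buildR_bdd k _ _ hc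
          omega


lemma Tri.one : Tri k 1 0 := by
  have := Tri.self k 0
  rwa [hM_zero] at this

lemma Tri.pow {x : MvPolynomial (Fin k) ℚ} {a : Multiset ℕ} (ha : Bdd k a)
    (hx : Tri k x a) (n : ℕ) : Tri k (x ^ n) (n • a) := by
  induction n with
  | zero => simpa using Tri.one k
  | succ n ih =>
    rw [pow_succ, succ_nsmul]
    exact Tri.mul k (ha.nsmul k n) ha ih hx

/-- the product of rectangular Schur polynomials encoded by `d` -/
noncomputable def prodRS (d : Fin k →₀ ℕ) : MvPolynomial (Fin k) ℚ :=
  ∏ i : Fin k, rectSchur k ((i : ℕ) + 1) ^ d i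

lemma bdd_sum_rect (d : Fin k →₀ ℕ) (t : Finset (Fin k)) :
    Bdd k (∑ i ∈ t, d i • rectM k ((i : ℕ) + 1)) := by
  classical
  induction t using Finset.induction with
  | empty => simpa using Bdd.zero k
  | @insert b u hnot' ih' =>
    rw [Finset.sum_insert hnot']
    have := b.isLt
    exact Bdd.add k (Bdd.nsmul k (rectM_bdd k (by omega) (by omega)) _) ih'

lemma tri_prodRS (hk : 0 < k) (d : Fin k →₀ ℕ) : Tri k (prodRS k d) (buildR k d) := by
  classical
  rw [prodRS, buildR]
  induction (Finset.univ : Finset (Fin k)) using Finset.induction with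
  | empty => simpa using Tri.one k
  | @insert a t hnot ih =>
    rw [Finset.sum_insert hnot, Finset.prod_insert hnot]
    have ha := a.isLt
    exact Tri.mul k (Bdd.nsmul k (rectM_bdd k (by omega) (by omega)) _) (bdd_sum_rect k d t)
      (Tri.pow k (rectM_bdd k (by omega) (by omega)) (tri_rectSchur k (by omega) (by omega)) _) ih

/-- index type for the global family -/
def Idx : Type := (Fin k →₀ ℕ) × {s : Multiset ℕ // IrrM k s}

/-- the global family `prodRS d * hM s` -/
noncomputable def Fam (p : Idx k) : MvPolynomial (Fin k) ℚ :=
  prodRS k p.1 * hM k p.2.1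

lemma irr_bdd {s : Multiset ℕ} (hs : IrrM k s) : Bdd k s := hs.1

lemma buildM_bdd (d : Fin k →₀ ℕ) {s : Multiset ℕ} (hs : Bdd k s) :
    Bdd k (buildM k d s) := hs.add k (buildR_bdd k d)

lemma tri_Fam (hk : 0 < k) (p : Idx k) : Tri k (Fam k p) (buildM k p.1 p.2.1) := by
  rw [Fam, buildM, add_comm p.2.1]
  exact Tri.mul k (buildR_bdd k p.1) (irr_bdd k p.2.2) (tri_prodRS k hk p.1) (Tri.self k _)

/-- the multiset with exponent vector `d` -/
def mset (d : Fin k →₀ ℕ) : Multiset ℕ :=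
  ∑ i : Fin k, Multiset.replicate (d i) ((i : ℕ) + 1)

lemma mset_bdd (d : Fin k →₀ ℕ) : Bdd k (mset k d) := by
  intro x hx
  rw [mset, Multiset.mem_sum] at hx
  rcases hx with ⟨i, _, hx⟩
  rw [Multiset.eq_of_mem_replicate hx]
  have := i.isLt
  omega

lemma cnt_mset (d : Fin k →₀ ℕ) : cnt k (mset k d) = d := by
  classical
  ext i
  rw [cnt_apply, mset, Multiset.count_sum']
  rw [Finset.sum_eq_single i]
  · rw [Multiset.count_replicate, if_pos rfl]
  · intro b _ hb
    rw [Multiset.count_replicate, if_neg (by intro hh; apply hb; apply Fin.ext; omega)]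
  · intro h; exact absurd (Finset.mem_univ _) h

lemma monomial_mem_span (d : Fin k →₀ ℕ) :
    (monomial d 1 : MvPolynomial (Fin k) ℚ) ∈
      Submodule.span ℚ {x | ∃ t : Multiset ℕ, Bdd k t ∧ x = hM k t} := by
  rw [← cnt_mset k d, ← hM_eq_monomial k _ (mset_bdd k d)]
  exact Submodule.subset_span ⟨mset k d, mset_bdd k d, rfl⟩

lemma hM_bdd_span_top :
    Submodule.span ℚ {x | ∃ t : Multiset ℕ, Bdd k t ∧ x = hM k t}
      = (⊤ : Submodule ℚ (MvPolynomial (Fin k) ℚ)) := by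
  rw [eq_top_iff]
  intro p _
  rw [← support_sum_monomial_coeff p]
  apply Submodule.sum_mem
  intro d _
  have : (monomial d (coeff d p) : MvPolynomial (Fin k) ℚ)
      = (coeff d p) • monomial d 1 := by
    rw [smul_monomial, smul_eq_mul, mul_one]
  rw [this]
  exact Submodule.smul_mem _ _ (monomial_mem_span k d)

/-- spanning: every bounded `hM` lies in the span of the family -/
lemma hM_mem_span_Fam (hk : 0 < k) :
    ∀ n : ℕ, ∀ t : Multiset ℕ, Bdd k t → k * sz t - wt t < n →
      hM k t ∈ Submodule.span ℚ (Set.range (Fam k)) := by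
  intro n
  induction n with
  | zero => intro t _ h; omega
  | succ n ih =>
    intro t ht hmeas
    obtain ⟨d, s, hirr, hbuild⟩ := buildM_surj k ht
    have htri := tri_Fam k hk (d, ⟨s, hirr⟩)
    rw [Tri] at htri
    simp only at htri
    rw [hbuild] at htri
    have hFam : Fam k (d, ⟨s, hirr⟩) ∈ Submodule.span ℚ (Set.range (Fam k)) :=
      Submodule.subset_span ⟨_, rfl⟩
    have hV : V k (sz t) (wt t) ≤ Submodule.span ℚ (Set.range (Fam k)) := by
      rw [V, Submodule.span_le]
      rintro x ⟨u, hu, hszu, hwtu, rfl⟩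
      have hwu : wt u ≤ k * sz u := wt_le_k_mul_sz k hu
      have hku : k * sz u = k * sz t := by rw [hszu]
      exact ih u hu (by omega)
    have : hM k t = Fam k (d, ⟨s, hirr⟩) - (Fam k (d, ⟨s, hirr⟩) - hM k t) := by ring
    rw [this]
    exact Submodule.sub_mem _ hFam (hV htri)

lemma span_Fam_top (hk : 0 < k) :
    Submodule.span ℚ (Set.range (Fam k)) = ⊤ := by
  rw [eq_top_iff, ← hM_bdd_span_top k, Submodule.span_le]
  rintro x ⟨t, ht, rfl⟩
  exact hM_mem_span_Fam k hk (k * sz t - wt t + 1) t ht (by omega)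


lemma coeff_hM {t u : Multiset ℕ} (ht : Bdd k t) (hu : Bdd k u) :
    coeff (cnt k u) (hM k t) = if t = u then 1 else 0 := by
  rw [hM_eq_monomial k t ht, coeff_monomial]
  by_cases h : t = u
  · rw [if_pos h, if_pos (by rw [h])]
  · rw [if_neg h, if_neg (by intro hh; exact h (cnt_inj k ht hu hh))]

lemma coeff_V {u : Multiset ℕ} (hu : Bdd k u) {n w : ℕ} (hw : wt u ≤ w)
    {q : MvPolynomial (Fin k) ℚ} (hq : q ∈ V k n w) : coeff (cnt k u) q = 0 := by
  induction hq using Submodule.span_induction with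
  | mem x hx =>
    rcases hx with ⟨t, ht, hszt, hwtt, rfl⟩
    rw [coeff_hM k ht hu, if_neg]
    intro hh
    subst hh
    omega
  | zero => simp
  | add x y _ _ hx hy => rw [coeff_add, hx, hy, add_zero]
  | smul c x _ hx => rw [coeff_smul, hx, smul_zero]

/-- partition associated to an index -/
def T (p : Idx k) : Multiset ℕ := buildM k p.1 p.2.1

lemma T_bdd (p : Idx k) : Bdd k (T k p) := buildM_bdd k p.1 (irr_bdd k p.2.2)

lemma T_inj {p q : Idx k} (h : T k p = T k q) : p = q := by
  obtain ⟨p1, p2, hp2⟩ := p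
  obtain ⟨q1, q2, hq2⟩ := q
  obtain ⟨hd, hs⟩ := buildM_inj k hp2 hq2 h
  subst hd
  subst hs
  rfl

lemma Fam_li (hk : 0 < k) : LinearIndependent ℚ (Fam k) := by
  rw [linearIndependent_iff']
  intro s g hsum i his
  by_contra hgi
  classical
  set A := s.filter (fun p => g p ≠ 0) with hA
  have hAne : A.Nonempty := ⟨i, Finset.mem_filter.2 ⟨his, hgi⟩⟩
  obtain ⟨p, hpA, hpmin⟩ := Finset.exists_min_image A (fun p => wt (T k p)) hAne
  have hsum' : ∑ q ∈ A, g q • Fam k q = 0 := by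
    rw [← hsum]
    apply Finset.sum_filter_of_ne
    intro q _ hq
    intro hgq
    exact hq (by rw [hgq, zero_smul])
  have hcoeff : ∀ q ∈ A, coeff (cnt k (T k p)) (Fam k q) = if q = p then 1 else 0 := by
    intro q hqA
    have htri := tri_Fam k hk q
    rw [Tri] at htri
    have h1 : coeff (cnt k (T k p)) (Fam k q - hM k (T k q)) = 0 := by
      apply coeff_V k (T_bdd k p) (hpmin q hqA) htri
    have h2 : coeff (cnt k (T k p)) (Fam k q)
        = coeff (cnt k (T k p)) (hM k (T k q)) := by
      rw [coeff_sub] at h1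
      linarith [h1]
    rw [h2, coeff_hM k (T_bdd k q) (T_bdd k p)]
    by_cases h : q = p
    · rw [if_pos h, if_pos (by rw [h])]
    · rw [if_neg h, if_neg (fun hh => h (T_inj k hh))]
  have : (0 : ℚ) = g p := by
    have hc := congrArg (coeff (cnt k (T k p))) hsum'
    rw [coeff_sum, coeff_zero] at hc
    have : ∀ q ∈ A, coeff (cnt k (T k p)) (g q • Fam k q)
        = if q = p then g q else 0 := by
      intro q hq
      rw [coeff_smul, hcoeff q hq]
      by_cases h : q = p <;> simp [h]
    rw [Finset.sum_congr rfl this, Finset.sum_ite_eq' A p (fun q => g q),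
      if_pos hpA] at hc
    exact hc.symm
  have hp' := Finset.mem_filter.1 hpA
  exact hp'.2 this.symm


lemma prodRS_add_single (d : Fin k →₀ ℕ) (i : Fin k) :
    prodRS k (d + Finsupp.single i 1) = rectSchur k ((i : ℕ) + 1) * prodRS k d := by
  classical
  rw [prodRS, prodRS]
  simp only [Finsupp.add_apply, pow_add, Finset.prod_mul_distrib]
  have h2 : (∏ j : Fin k, rectSchur k ((j : ℕ) + 1) ^ (Finsupp.single i 1 j))
      = rectSchur k ((i : ℕ) + 1) := by
    rw [Fintype.prod_eq_single i]
    · rw [Finsupp.single_eq_same, pow_one]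
    · intro j hj
      rw [Finsupp.single_eq_of_ne' (Ne.symm hj), pow_zero]
  rw [h2, mul_comm]

/-- span of family members with nonzero rectangle part -/
noncomputable def W : Submodule ℚ (MvPolynomial (Fin k) ℚ) :=
  Submodule.span ℚ (Fam k '' {p : Idx k | p.1 ≠ 0})

lemma mul_rectSchur_mem_W (hk : 0 < k) (g : MvPolynomial (Fin k) ℚ) (i : Fin k) :
    g * rectSchur k ((i : ℕ) + 1) ∈ W k := by
  have hg : g ∈ Submodule.span ℚ (Set.range (Fam k)) := by
    rw [span_Fam_top k hk]; trivial
  induction hg using Submodule.span_induction with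
  | mem x hx =>
    rcases hx with ⟨p, rfl⟩
    have : Fam k p * rectSchur k ((i : ℕ) + 1)
        = Fam k (p.1 + Finsupp.single i 1, p.2) := by
      unfold Fam
      simp only
      rw [prodRS_add_single]
      ring
    rw [this]
    apply Submodule.subset_span
    refine ⟨(p.1 + Finsupp.single i 1, p.2), ?_, rfl⟩
    show (p.1 + Finsupp.single i 1) ≠ 0
    intro hc
    have := DFunLike.congr_fun hc i
    simp [Finsupp.single_eq_same] at this
  | zero => rw [zero_mul]; exact Submodule.zero_mem _
  | add x y _ _ hx hy => rw [add_mul]; exact Submodule.add_mem _ hx hy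
  | smul c x _ hx => rw [smul_mul_assoc]; exact Submodule.smul_mem _ c hx

lemma rectIdeal_le_W (hk : 0 < k) (x : MvPolynomial (Fin k) ℚ)
    (hx : x ∈ rectIdeal k) : x ∈ W k := by
  have hx2 : x ∈ Submodule.span (MvPolynomial (Fin k) ℚ) (rectSchur k '' Set.Icc 1 k) := hx
  rw [Submodule.mem_span_set] at hx2
  obtain ⟨c, hsupp, hrep⟩ := hx2
  rw [← hrep]
  rw [Finsupp.sum]
  apply Submodule.sum_mem
  intro a ha
  have hma := hsupp ha
  rcases hma with ⟨ℓ, hℓ, rfl⟩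
  rw [Set.mem_Icc] at hℓ
  have : rectSchur k ℓ = rectSchur k (((⟨ℓ - 1, by omega⟩ : Fin k) : ℕ) + 1) := by
    congr 1
    show ℓ = ℓ - 1 + 1
    omega
  rw [smul_eq_mul, this]
  exact mul_rectSchur_mem_W k hk _ _

lemma Fam_mem_rectIdeal {p : Idx k} (hp : p.1 ≠ 0) : Fam k p ∈ rectIdeal k := by
  have : ∃ i : Fin k, p.1 i ≠ 0 := by
    by_contra hc
    push_neg at hc
    exact hp (Finsupp.ext fun i => hc i)
  rcases this with ⟨i, hi⟩
  have hdvd : rectSchur k ((i : ℕ) + 1) ∣ Fam k p := by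
    rw [Fam, prodRS]
    apply Dvd.dvd.mul_right
    exact dvd_trans (dvd_pow_self _ hi) (Finset.dvd_prod_of_mem _ (Finset.mem_univ i))
  rcases hdvd with ⟨c, hc⟩
  rw [hc]
  apply Ideal.mul_mem_right
  apply Ideal.subset_span
  exact ⟨(i : ℕ) + 1, Set.mem_Icc.2 ⟨by omega, i.isLt⟩, rfl⟩

lemma Fam_zero (x : {s : Multiset ℕ // IrrM k s}) :
    Fam k ((0 : Fin k →₀ ℕ), x) = hM k x.1 := by
  unfold Fam
  simp only [prodRS, Finsupp.coe_zero, Pi.zero_apply, pow_zero, Finset.prod_const_one, one_mul]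

/-- the quotient family -/
noncomputable def G (x : {s : Multiset ℕ // IrrM k s}) :
    MvPolynomial (Fin k) ℚ ⧸ rectIdeal k :=
  Ideal.Quotient.mk (rectIdeal k) (hM k x.1)

noncomputable def mkL : MvPolynomial (Fin k) ℚ →ₗ[ℚ] MvPolynomial (Fin k) ℚ ⧸ rectIdeal k :=
  (Ideal.Quotient.mkₐ ℚ (rectIdeal k)).toLinearMap

lemma G_li (hk : 0 < k) : LinearIndependent ℚ (G k) := by
  classical
  rw [linearIndependent_iff']
  intro s g hsum i his
  set z : MvPolynomial (Fin k) ℚ := ∑ x ∈ s, g x • hM k x.1 with hz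
  have hmkz : mkL k z = 0 := by
    rw [hz, map_sum]
    rw [← hsum]
    apply Finset.sum_congr rfl
    intro x _
    rw [map_smul]
    rfl
  have hzI : z ∈ rectIdeal k := by
    have : Ideal.Quotient.mk (rectIdeal k) z = 0 := hmkz
    exact (Ideal.Quotient.eq_zero_iff_mem).1 this
  have hzW : z ∈ W k := rectIdeal_le_W k hk z hzI
  have hz0 : z ∈ Submodule.span ℚ (Fam k '' {p : Idx k | p.1 = 0}) := by
    rw [hz]
    apply Submodule.sum_mem
    intro x _
    apply Submodule.smul_mem
    apply Submodule.subset_span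
    exact ⟨((0 : Fin k →₀ ℕ), x), rfl, Fam_zero k x⟩
  have hdisj : Disjoint (Submodule.span ℚ (Fam k '' {p : Idx k | p.1 = 0})) (W k) := by
    rw [W]
    apply (Fam_li k hk).disjoint_span_image
    rw [Set.disjoint_iff]
    rintro p ⟨h0, hn0⟩
    exact hn0 h0
  have hz00 : z = 0 := by
    have := Submodule.disjoint_def.1 hdisj z hz0 hzW
    exact this
  -- now use linear independence of the subfamily
  have hfli : LinearIndependent ℚ (fun x : {s : Multiset ℕ // IrrM k s} => hM k x.1) := by
    have hinj : Function.Injective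
        (fun x : {s : Multiset ℕ // IrrM k s} => (((0 : Fin k →₀ ℕ), x) : Idx k)) := by
      intro x y hxy
      exact congrArg Prod.snd hxy
    have := (Fam_li k hk).comp _ hinj
    have heq : (Fam k ∘ fun x : {s : Multiset ℕ // IrrM k s} => (((0 : Fin k →₀ ℕ), x) : Idx k))
        = fun x => hM k x.1 := funext fun x => Fam_zero k x
    rwa [heq] at this
  rw [linearIndependent_iff'] at hfli
  exact hfli s g (by rw [← hz, hz00]) i his

lemma G_span (hk : 0 < k) : ⊤ ≤ Submodule.span ℚ (Set.range (G k)) := by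
  intro y _
  obtain ⟨x, rfl⟩ := Ideal.Quotient.mk_surjective y
  have hx : x ∈ Submodule.span ℚ (Set.range (Fam k)) := by
    rw [span_Fam_top k hk]; trivial
  have : Ideal.Quotient.mk (rectIdeal k) x = mkL k x := rfl
  rw [this]
  have himg : mkL k x ∈ Submodule.map (mkL k) (Submodule.span ℚ (Set.range (Fam k))) :=
    ⟨x, hx, rfl⟩
  rw [← Submodule.span_image] at himg
  refine (Submodule.span_le.2 ?_) himg
  rintro w ⟨_, ⟨p, rfl⟩, rfl⟩
  by_cases hp : p.1 = 0
  · have : p = ((0 : Fin k →₀ ℕ), p.2) := by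
      obtain ⟨p1, p2⟩ := p
      simp only at hp
      rw [hp]
    rw [this]
    have : mkL k (Fam k ((0 : Fin k →₀ ℕ), p.2)) = G k p.2 := by
      rw [Fam_zero, G]; rfl
    rw [this]
    exact Submodule.subset_span ⟨p.2, rfl⟩
  · have : mkL k (Fam k p) = 0 := by
      show Ideal.Quotient.mk (rectIdeal k) (Fam k p) = 0
      rw [Ideal.Quotient.eq_zero_iff_mem]
      exact Fam_mem_rectIdeal k hp
    rw [this]
    exact Submodule.zero_mem _

/-- basis of the quotient indexed by irreducible multisets -/
noncomputable def basisQ (hk : 0 < k) :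
    Module.Basis {s : Multiset ℕ // IrrM k s} ℚ (MvPolynomial (Fin k) ℚ ⧸ rectIdeal k) :=
  Module.Basis.mk (G_li k hk) (G_span k hk)

lemma basisQ_apply (hk : 0 < k) (x : {s : Multiset ℕ // IrrM k s}) :
    basisQ k hk x = Ideal.Quotient.mk (rectIdeal k) (hM k x.1) := by
  rw [basisQ, Module.Basis.mk_apply, G]


lemma hProd_cons (a : ℕ) (l : List ℕ) :
    hProd k (a :: l) = hElem k (a : ℤ) * hProd k l := by
  simp [hProd]

lemma hM_coe (l : List ℕ) : hM k (l : Multiset ℕ) = hProd k l := by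
  induction l with
  | nil => simp [hProd]
  | cons a l ih =>
    rw [show ((a :: l : List ℕ) : Multiset ℕ) = a ::ₘ (l : Multiset ℕ) from rfl,
      hM_cons, hProd_cons, ih]

lemma irrM_coe {l : List ℕ} (hl : IsKIrreducible k l) : IrrM k (l : Multiset ℕ) := by
  obtain ⟨⟨⟨hsort, hpos⟩, hbd⟩, hcnt⟩ := hl
  constructor
  · intro x hx
    rw [Multiset.mem_coe] at hx
    exact ⟨hpos x hx, hbd x hx⟩
  · intro j hj1 hj2
    rw [Multiset.coe_count]
    exact hcnt j hj1 hj2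

/-- the equivalence between irreducible lists and irreducible multisets -/
noncomputable def listEquiv : {l : List ℕ // IsKIrreducible k l} ≃ {s : Multiset ℕ // IrrM k s} where
  toFun l := ⟨(l.1 : Multiset ℕ), irrM_coe k l.2⟩
  invFun s := ⟨s.1.sort (· ≥ ·), by
    obtain ⟨hbdd, hcnt⟩ := s.2
    refine ⟨⟨⟨Multiset.pairwise_sort _ _, ?_⟩, ?_⟩, ?_⟩
    · intro x hx
      rw [Multiset.mem_sort] at hx
      exact (hbdd x hx).1
    · intro x hx
      rw [Multiset.mem_sort] at hx
      exact (hbdd x hx).2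
    · intro j hj1 hj2
      have : (Multiset.sort s.1 (· ≥ ·) : List ℕ).count j = s.1.count j := by
        rw [← Multiset.coe_count, Multiset.sort_eq]
      rw [this]
      exact hcnt j hj1 hj2⟩
  left_inv l := by
    haveI : IsAntisymm ℕ (· ≥ ·) := ⟨fun a b h1 h2 => le_antisymm h2 h1⟩
    apply Subtype.ext
    apply List.Perm.eq_of_pairwise' (r := (· ≥ ·))
    · show List.Pairwise (· ≥ ·) (Multiset.sort ((l.1 : List ℕ) : Multiset ℕ) (· ≥ ·))
      exact Multiset.pairwise_sort (α := ℕ) _ (· ≥ ·)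
    · exact l.2.1.1.1
    · exact Multiset.coe_eq_coe.1 (Multiset.sort_eq (α := ℕ) (l.1 : Multiset ℕ) (· ≥ ·))
  right_inv s := by
    apply Subtype.ext
    exact Multiset.sort_eq _ _

theorem hProd_irreducible_basis_quotient (hk : 0 < k) :
    ∃ b : Module.Basis {l : List ℕ // IsKIrreducible k l} ℚ
        (MvPolynomial (Fin k) ℚ ⧸ rectIdeal k),
      ∀ l, b l = Ideal.Quotient.mk (rectIdeal k) (hProd k l.1) := by
  refine ⟨(basisQ k hk).reindex (listEquiv k).symm, ?_⟩
  intro l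
  rw [Module.Basis.reindex_apply, Equiv.symm_symm, basisQ_apply]
  congr 1
  exact hM_coe k l.1

end KRect

/-- The images in the quotient ring `R/I_k` of the products
`h_λ = h_{λ_1} ⋯ h_{λ_n}`, as `λ` ranges over all `k`-irreducible partitions,
form a basis of `R/I_k` as a `ℚ`-vector space. -/
theorem hProd_irreducible_basis_quotient (k : ℕ) (hk : 0 < k) :
    ∃ b : Module.Basis {l : List ℕ // IsKIrreducible k l} ℚ
        (MvPolynomial (Fin k) ℚ ⧸ rectIdeal k),
      ∀ l, b l = Ideal.Quotient.mk (rectIdeal k) (hProd k l.1) := by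
  exact KRect.hProd_irreducible_basis_quotient k hk
end
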